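/- arXiv:2602.14967 — 9 statements merged into one kernel-verified Lean document; each statement's English description precedes it below -/
import Mathlib

section
/- Let V be a real Hilbert space, K ⊆ V a nonempty closed convex set, A : V × V → ℝ a bilinear form that is bounded (there is M > 0 with |A(u,v)| ≤ M·‖u‖·‖v‖ for all u, v ∈ V) and coercive (there is C > 0 with A(v,v) ≥ C·‖v‖² for all v ∈ V), and f : V → ℝ a continuous linear functional. Then there exists a unique u* ∈ K such that A(u*, v − u*) ≥ f(v − u*) for all v ∈ K. -/
open scoped RealInnerProductSpace

/-- **Lions–Stampacchia theorem for non-symmetric variational inequalities.**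
Let `V` be a real Hilbert space, `K ⊆ V` nonempty closed convex, `A` a bounded
coercive bilinear form (not necessarily symmetric), and `f` a continuous linear
functional. Then there is a unique `u* ∈ K` with
`A(u*, v − u*) ≥ f(v − u*)` for all `v ∈ K`. -/
theorem statement0
    {V : Type*} [NormedAddCommGroup V] [InnerProductSpace ℝ V] [CompleteSpace V]
    (K : Set V) (hKne : K.Nonempty) (hKcl : IsClosed K) (hKcv : Convex ℝ K)
    (A : V →ₗ[ℝ] V →ₗ[ℝ] ℝ) (M : ℝ) (hM : 0 < M)
    (hAbdd : ∀ u v : V, |A u v| ≤ M * ‖u‖ * ‖v‖)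
    (C : ℝ) (hC : 0 < C) (hAcoer : ∀ v : V, C * ‖v‖ ^ 2 ≤ A v v)
    (f : V →L[ℝ] ℝ) :
    ∃! u : V, u ∈ K ∧ ∀ v ∈ K, f (v - u) ≤ A u (v - u) := by
  -- Uniqueness
  have uniq : ∀ u₁ u₂ : V,
      (u₁ ∈ K ∧ ∀ v ∈ K, f (v - u₁) ≤ A u₁ (v - u₁)) →
      (u₂ ∈ K ∧ ∀ v ∈ K, f (v - u₂) ≤ A u₂ (v - u₂)) → u₁ = u₂ := by
    intro u₁ u₂ ⟨h₁K, h₁⟩ ⟨h₂K, h₂⟩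
    have e1 := h₁ u₂ h₂K
    have e2 := h₂ u₁ h₁K
    have key : A (u₁ - u₂) (u₁ - u₂) ≤ 0 := by
      have : A u₁ (u₁ - u₂) ≤ A u₂ (u₁ - u₂) := by
        have hs : (u₁ - u₂ : V) = -(u₂ - u₁) := by abel
        calc A u₁ (u₁ - u₂) = -(A u₁ (u₂ - u₁)) := by rw [hs, map_neg]
        _ ≤ -(f (u₂ - u₁)) := by linarith
        _ = f (u₁ - u₂) := by rw [hs, map_neg]
        _ ≤ A u₂ (u₁ - u₂) := e2
      have : A (u₁ - u₂) (u₁ - u₂) = A u₁ (u₁ - u₂) - A u₂ (u₁ - u₂) := by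
        simp only [map_sub, LinearMap.sub_apply]; ring
      linarith
    have := hAcoer (u₁ - u₂)
    have hn : ‖u₁ - u₂‖ ^ 2 ≤ 0 := by nlinarith
    have : ‖u₁ - u₂‖ = 0 := by nlinarith [norm_nonneg (u₁ - u₂), sq_nonneg ‖u₁ - u₂‖]
    have := norm_eq_zero.mp this
    exact sub_eq_zero.mp this
  -- Riesz representation of A and f
  have hTex : ∀ u : V, ∃ t : V, ∀ v : V, ⟪t, v⟫ = A u v := by
    intro u
    refine ⟨(InnerProductSpace.toDual ℝ V).symm
      (LinearMap.mkContinuous (A u) (M * ‖u‖) (fun v => by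
        calc ‖A u v‖ = |A u v| := rfl
        _ ≤ M * ‖u‖ * ‖v‖ := hAbdd u v)), fun v => ?_⟩
    rw [InnerProductSpace.toDual_symm_apply]
    rfl
  choose T hT using hTex
  obtain ⟨w, hw⟩ : ∃ w : V, ∀ v : V, ⟪w, v⟫ = f v :=
    ⟨(InnerProductSpace.toDual ℝ V).symm f, fun v => InnerProductSpace.toDual_symm_apply⟩
  -- Projection onto K
  have projEx : ∀ z : V, ∃ u, u ∈ K ∧ ∀ v ∈ K, ⟪z - u, v - u⟫ ≤ 0 := by
    intro z
    obtain ⟨u, huK, hmin⟩ := exists_norm_eq_iInf_of_complete_convex hKne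
      (hKcl.isComplete) hKcv z
    exact ⟨u, huK, (norm_eq_iInf_iff_real_inner_le_zero hKcv huK).mp hmin⟩
  choose P hPK hPle using projEx
  -- the contraction map
  set ρ : ℝ := C / M ^ 2 with hρdef
  have hρ : 0 < ρ := div_pos hC (by positivity)
  set Φ : V → V := fun z => P (z - ρ • (T z - w)) with hΦdef
  -- T is Lipschitz-type: key inner product identities
  have hTsub : ∀ z z' v : V, ⟪T z - T z', v⟫ = A (z - z') v := by
    intro z z' v
    rw [inner_sub_left, hT, hT, map_sub, LinearMap.sub_apply]
  have hTnorm : ∀ z z' : V, ‖T z - T z'‖ ≤ M * ‖z - z'‖ := by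
    intro z z'
    rcases eq_or_ne (T z - T z') 0 with h | h
    · rw [h, norm_zero]; positivity
    · have h1 : ‖T z - T z'‖ ^ 2 = A (z - z') (T z - T z') := by
        rw [← hTsub z z', real_inner_self_eq_norm_sq]
      have h2 : A (z - z') (T z - T z') ≤ M * ‖z - z'‖ * ‖T z - T z'‖ :=
        le_trans (le_abs_self _) (hAbdd _ _)
      have h3 : 0 < ‖T z - T z'‖ := norm_pos_iff.mpr h
      nlinarith
  -- contraction estimate
  set s : ℝ := max (1 - 2 * ρ * C + ρ ^ 2 * M ^ 2) 0 with hsdef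
  have hs1 : s < 1 := by
    have : ρ ^ 2 * M ^ 2 < 2 * ρ * C := by
      have : ρ * M ^ 2 = C := by rw [hρdef]; field_simp [hM.ne']
      nlinarith
    apply max_lt (by linarith) one_pos
  have hs0 : 0 ≤ s := le_max_right _ _
  have hcontr : ∀ z z' : V, ‖Φ z - Φ z'‖ ≤ Real.sqrt s * ‖z - z'‖ := by
    intro z z'
    set a := z - ρ • (T z - w) with hadef
    set b := z' - ρ • (T z' - w) with hbdef
    -- nonexpansiveness of projection
    have hne : ‖P a - P b‖ ≤ ‖a - b‖ := by
      have h1 := hPle a (P b) (hPK b)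
      have h2 := hPle b (P a) (hPK a)
      have hsum : ⟪(a - b) - (P a - P b), P b - P a⟫ ≤ 0 := by
        have : (a - b) - (P a - P b) = (a - P a) - (b - P b) := by abel
        rw [this, inner_sub_left]
        have h2' : ⟪b - P b, P a - P b⟫ ≤ 0 := h2
        have : ⟪b - P b, P b - P a⟫ = -⟪b - P b, P a - P b⟫ := by
          rw [← inner_neg_right]; congr 1; abel
        linarith [h1, this ▸ neg_nonneg.mpr h2']
      have key : ‖P a - P b‖ ^ 2 ≤ ⟪a - b, P a - P b⟫ := by
        have : ⟪P a - P b, P a - P b⟫ ≤ ⟪a - b, P a - P b⟫ := by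
          have e : ⟪(a - b) - (P a - P b), P b - P a⟫
              = -⟪a - b, P a - P b⟫ + ⟪P a - P b, P a - P b⟫ := by
            rw [inner_sub_left]
            have e1 : ⟪a - b, P b - P a⟫ = -⟪a - b, P a - P b⟫ := by
              rw [← inner_neg_right]; congr 1; abel
            have e2 : ⟪P a - P b, P b - P a⟫ = -⟪P a - P b, P a - P b⟫ := by
              rw [← inner_neg_right]; congr 1; abel
            rw [e1, e2]; ring
          rw [e] at hsum; linarith
        rwa [real_inner_self_eq_norm_sq] at this
      have hcs : ⟪a - b, P a - P b⟫ ≤ ‖a - b‖ * ‖P a - P b‖ :=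
        real_inner_le_norm _ _
      rcases eq_or_lt_of_le (norm_nonneg (P a - P b)) with h | h
      · rw [← h]; exact norm_nonneg _
      · nlinarith
    -- norm of a - b
    have hab : ‖a - b‖ ^ 2 ≤ s * ‖z - z'‖ ^ 2 := by
      have e : a - b = (z - z') - ρ • (T z - T z') := by
        simp only [hadef, hbdef, smul_sub]; abel
      have expand : ‖a - b‖ ^ 2 = ‖z - z'‖ ^ 2 - 2 * (ρ * A (z - z') (z - z'))
          + ρ ^ 2 * ‖T z - T z'‖ ^ 2 := by
        rw [e, norm_sub_sq_real, real_inner_smul_right,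
          real_inner_comm (T z - T z') (z - z'), hTsub, norm_smul,
          Real.norm_eq_abs, abs_of_pos hρ]
        ring
      have h1 : C * ‖z - z'‖ ^ 2 ≤ A (z - z') (z - z') := hAcoer _
      have h2 : ‖T z - T z'‖ ≤ M * ‖z - z'‖ := hTnorm z z'
      have h2' : ‖T z - T z'‖ ^ 2 ≤ M ^ 2 * ‖z - z'‖ ^ 2 := by
        nlinarith [norm_nonneg (T z - T z')]
      have : ‖a - b‖ ^ 2 ≤ (1 - 2 * ρ * C + ρ ^ 2 * M ^ 2) * ‖z - z'‖ ^ 2 := by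
        rw [expand]; nlinarith
      calc ‖a - b‖ ^ 2 ≤ (1 - 2 * ρ * C + ρ ^ 2 * M ^ 2) * ‖z - z'‖ ^ 2 := this
      _ ≤ s * ‖z - z'‖ ^ 2 := by
        apply mul_le_mul_of_nonneg_right (le_max_left _ _) (by positivity)
    have : ‖Φ z - Φ z'‖ ^ 2 ≤ s * ‖z - z'‖ ^ 2 := by
      calc ‖Φ z - Φ z'‖ ^ 2 = ‖P a - P b‖ ^ 2 := rfl
      _ ≤ ‖a - b‖ ^ 2 := by nlinarith [norm_nonneg (P a - P b), norm_nonneg (a - b)]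
      _ ≤ s * ‖z - z'‖ ^ 2 := hab
    calc ‖Φ z - Φ z'‖ = Real.sqrt (‖Φ z - Φ z'‖ ^ 2) := by
          rw [Real.sqrt_sq (norm_nonneg _)]
    _ ≤ Real.sqrt (s * ‖z - z'‖ ^ 2) := Real.sqrt_le_sqrt this
    _ = Real.sqrt s * ‖z - z'‖ := by
        rw [Real.sqrt_mul hs0, Real.sqrt_sq (norm_nonneg _)]
  -- Banach fixed point
  have hk1 : Real.sqrt s < 1 := by
    nlinarith [Real.sq_sqrt hs0, Real.sqrt_nonneg s]
  have hΦcontr : ContractingWith (Real.sqrt s).toNNReal Φ := by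
    constructor
    · exact_mod_cast Real.toNNReal_lt_one.mpr hk1
    · apply LipschitzWith.of_dist_le_mul
      intro x y
      rw [dist_eq_norm, dist_eq_norm]
      calc ‖Φ x - Φ y‖ ≤ Real.sqrt s * ‖x - y‖ := hcontr x y
      _ = ((Real.sqrt s).toNNReal : ℝ) * ‖x - y‖ := by
        rw [Real.coe_toNNReal _ (Real.sqrt_nonneg s)]
  haveI : Nonempty V := ⟨hKne.choose⟩
  obtain ⟨u, hu⟩ : ∃ u : V, Φ u = u := ⟨_, hΦcontr.fixedPoint_isFixedPt⟩
  -- the fixed point solves the VI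
  have hmem : u ∈ K := by rw [← hu]; exact hPK _
  have hineq : ∀ v ∈ K, f (v - u) ≤ A u (v - u) := by
    intro v hv
    have h := hPle (u - ρ • (T u - w)) v hv
    rw [show Φ u = P (u - ρ • (T u - w)) from rfl] at hu
    rw [hu] at h
    have e : (u - ρ • (T u - w)) - u = -(ρ • (T u - w)) := by abel
    rw [e, inner_neg_left, real_inner_smul_left, neg_nonpos] at h
    have h' : 0 ≤ ⟪T u - w, v - u⟫ := (mul_nonneg_iff_of_pos_left hρ).mp h
    rw [inner_sub_left, hT, hw] at h'
    linarith
  exact ⟨u, ⟨hmem, hineq⟩, fun y hy => uniq y u hy ⟨hmem, hineq⟩⟩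
end

section
/- Let V_h and W_h be real inner product spaces. Let A₀ : V_h × V_h → ℝ be bilinear with A₀(v,v) ≥ C·‖v‖² for all v (C > 0), let A_n : V_h × V_h → ℝ be bilinear with A_n(v,v) = 0 for all v and |A_n(u,v)| ≤ c₁·‖u‖·‖v‖ for all u, v, let b : V_h × W_h → ℝ be bilinear, let G : W_h → W_h be monotone (⟨G ψ₁ − G ψ₂, ψ₁ − ψ₂⟩ ≥ 0 for all ψ₁, ψ₂), let ℓ : V_h → ℝ be linear, and let α > 0, τ, t ∈ ℝ, q₁, q₂ ∈ V_h. Suppose for i = 1, 2 the pairs (u_i, ψ_i) ∈ V_h × W_h satisfy α·(A₀(u_i, v) + τ·A_n(u_i, v)) + b(v, ψ_i) = (τ − t)·α·A_n(q_i, v) + ℓ(v) for all v ∈ V_h, and b(u_i, w) = ⟨G ψ_i, w⟩ for all w ∈ W_h. Then ‖u₁ − u₂‖ ≤ (c₁ / C)·|τ − t|·‖q₁ − q₂‖. -/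
open scoped RealInnerProductSpace

/-- Contraction estimate for the shifted fixed-point map in the continuation
argument for the proximal Galerkin subproblem: if `(u i, ψ i)` solve the shifted
systems with data `q i` (`i = 1, 2`), then
`‖u₁ − u₂‖ ≤ (c₁ / C) · |τ − t| · ‖q₁ − q₂‖`. -/
theorem statement3
    {V W : Type*} [NormedAddCommGroup V] [InnerProductSpace ℝ V]
    [NormedAddCommGroup W] [InnerProductSpace ℝ W]
    (A0 : V →ₗ[ℝ] V →ₗ[ℝ] ℝ) (C : ℝ) (hC : 0 < C)
    (hA0coer : ∀ v : V, C * ‖v‖ ^ 2 ≤ A0 v v)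
    (An : V →ₗ[ℝ] V →ₗ[ℝ] ℝ) (hAnskew : ∀ v : V, An v v = 0)
    (c1 : ℝ) (hAnbdd : ∀ u v : V, |An u v| ≤ c1 * ‖u‖ * ‖v‖)
    (b : V →ₗ[ℝ] W →ₗ[ℝ] ℝ)
    (G : W → W) (hG : ∀ ψ1 ψ2 : W, 0 ≤ ⟪G ψ1 - G ψ2, ψ1 - ψ2⟫)
    (l : V →ₗ[ℝ] ℝ) (α : ℝ) (hα : 0 < α) (τ t : ℝ) (q1 q2 : V)
    (u1 u2 : V) (ψ1 ψ2 : W)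
    (h1 : ∀ v : V, α * (A0 u1 v + τ * An u1 v) + b v ψ1 = (τ - t) * α * An q1 v + l v)
    (h1' : ∀ w : W, b u1 w = ⟪G ψ1, w⟫)
    (h2 : ∀ v : V, α * (A0 u2 v + τ * An u2 v) + b v ψ2 = (τ - t) * α * An q2 v + l v)
    (h2' : ∀ w : W, b u2 w = ⟪G ψ2, w⟫) :
    ‖u1 - u2‖ ≤ (c1 / C) * |τ - t| * ‖q1 - q2‖ := by
  set e := u1 - u2 with he
  set η := ψ1 - ψ2 with hη
  -- b e η is nonnegative by monotonicity of G
  have hbpos : 0 ≤ b e η := by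
    have : b e η = ⟪G ψ1 - G ψ2, η⟫ := by
      simp [he, map_sub, h1' η, h2' η, inner_sub_left]
    rw [this]
    exact hG ψ1 ψ2
  -- subtract the two variational equalities tested with v = e
  have key : α * A0 e e + b e η = (τ - t) * α * An (q1 - q2) e := by
    have H1 := h1 e
    have H2 := h2 e
    have hsub : α * (A0 u1 e + τ * An u1 e) + b e ψ1
        - (α * (A0 u2 e + τ * An u2 e) + b e ψ2)
        = (τ - t) * α * An q1 e - (τ - t) * α * An q2 e := by
      rw [H1, H2]; ring
    have hA0 : A0 e e = A0 u1 e - A0 u2 e := by simp [he, map_sub]; ring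
    have hAn : An u1 e - An u2 e = 0 := by
      have : An e e = An u1 e - An u2 e := by simp [he, map_sub]; ring
      rw [← this, hAnskew]
    have hb : b e η = b e ψ1 - b e ψ2 := by simp [hη, map_sub]
    have hAnq : An (q1 - q2) e = An q1 e - An q2 e := by simp [map_sub]
    rw [hA0, hb, hAnq]
    linear_combination hsub - α * τ * hAn
  -- coercivity estimate
  have hcoer : C * ‖e‖ ^ 2 ≤ |τ - t| * (c1 * ‖q1 - q2‖ * ‖e‖) := by
    have h1le : α * A0 e e ≤ (τ - t) * α * An (q1 - q2) e := by linarith [hbpos, key]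
    have h2le : (τ - t) * An (q1 - q2) e ≤ |τ - t| * (c1 * ‖q1 - q2‖ * ‖e‖) := by
      calc (τ - t) * An (q1 - q2) e ≤ |(τ - t) * An (q1 - q2) e| := le_abs_self _
        _ = |τ - t| * |An (q1 - q2) e| := abs_mul _ _
        _ ≤ |τ - t| * (c1 * ‖q1 - q2‖ * ‖e‖) := by
            exact mul_le_mul_of_nonneg_left (hAnbdd _ _) (abs_nonneg _)
    have hA0e : A0 e e ≤ (τ - t) * An (q1 - q2) e := by
      have hr : (τ - t) * α * An (q1 - q2) e = α * ((τ - t) * An (q1 - q2) e) := by ring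
      have h' : α * A0 e e ≤ α * ((τ - t) * An (q1 - q2) e) := by linarith
      exact (mul_le_mul_iff_right₀ hα).mp h'
    exact le_trans (hA0coer e) (le_trans hA0e h2le)
  rcases eq_or_ne e 0 with h0 | h0
  · rw [h0, norm_zero]
    rcases eq_or_ne q1 q2 with hq | hq
    · simp [hq]
    · have hqn : 0 < ‖q1 - q2‖ := by
        rw [norm_pos_iff]; exact sub_ne_zero_of_ne hq
      have : 0 ≤ c1 := by
        have := hAnbdd (q1 - q2) (q1 - q2)
        rw [hAnskew, abs_zero] at this
        nlinarith [mul_pos hqn hqn]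
      positivity
  · have hen : 0 < ‖e‖ := norm_pos_iff.mpr h0
    rw [div_mul_eq_mul_div, div_mul_eq_mul_div, le_div_iff₀ hC]
    nlinarith [hcoer]
end

section
/- Let V_h and W_h be finite-dimensional real inner product spaces. Let A : V_h × V_h → ℝ be a bilinear form (not necessarily symmetric) with A(v,v) ≥ C·‖v‖² for all v ∈ V_h, for some C > 0. Let b : V_h × W_h → ℝ be bilinear and satisfy the inf-sup condition: there is μ > 0 such that for every nonzero w ∈ W_h there exists a nonzero v ∈ V_h with b(v, w) ≥ μ·‖v‖·‖w‖. Let F : W_h → ℝ be convex and differentiable with gradient ∇F : W_h → W_h, let α > 0, and let ℓ : V_h → ℝ be linear. Then there exists exactly one pair (u, ψ) ∈ V_h × W_h such that α·A(u, v) + b(v, ψ) = ℓ(v) for all v ∈ V_h and b(u, w) = ⟨∇F(ψ), w⟩ for all w ∈ W_h. -/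
open scoped RealInnerProductSpace

set_option maxHeartbeats 1600000


lemma convex_grad_ineq {W : Type*} [NormedAddCommGroup W] [InnerProductSpace ℝ W]
    [CompleteSpace W] {F : W → ℝ} (hF : ConvexOn ℝ Set.univ F)
    {x g : W} (hg : HasGradientAt F g x) (y : W) : F x + ⟪g, y - x⟫ ≤ F y := by
  set φ : ℝ → ℝ := fun t => F (x + t • (y - x)) with hφ
  have hc : HasDerivAt (fun s : ℝ => x + s • (y - x)) (y - x) 0 := by
    simpa using ((hasDerivAt_id (0:ℝ)).smul_const (y - x)).const_add x
  have hd : HasDerivAt φ ⟪g, y - x⟫ 0 := by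
    have hx : x + (0:ℝ) • (y - x) = x := by simp
    have h2 := (hx ▸ hasGradientAt_iff_hasFDerivAt.mp hg).comp_hasDerivAt (0:ℝ) hc
    simpa [φ, InnerProductSpace.toDual_apply_apply, Function.comp_def] using h2
  have hslope : ∀ t ∈ Set.Ioc (0:ℝ) 1, slope φ 0 t ≤ φ 1 - φ 0 := by
    intro t ht
    have h1 : φ t ≤ (1 - t) * φ 0 + t * φ 1 := by
      have hxy : x + t • (y - x) = (1 - t) • x + t • y := by
        rw [smul_sub, sub_smul, one_smul]; abel
      have h3 := hF.2 (Set.mem_univ x) (Set.mem_univ y)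
        (by linarith [ht.2] : (0:ℝ) ≤ 1 - t) (le_of_lt ht.1) (by ring)
      simpa [φ, hxy, smul_eq_mul] using h3
    rw [slope_def_field, sub_zero, div_le_iff₀ ht.1]
    nlinarith [ht.1]
  have htend : Filter.Tendsto (slope φ 0) (nhdsWithin 0 (Set.Ioi 0)) (nhds ⟪g, y - x⟫) :=
    (hasDerivAt_iff_tendsto_slope.mp hd).mono_left
      (nhdsWithin_mono 0 (fun t ht => ne_of_gt ht))
  have hle : ⟪g, y - x⟫ ≤ φ 1 - φ 0 := by
    refine le_of_tendsto htend ?_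
    filter_upwards [Ioc_mem_nhdsGT_of_mem (Set.mem_Ico.mpr ⟨le_refl 0, one_pos⟩)] with t ht
    exact hslope t ht
  have h0 : φ 0 = F x := by simp [φ]
  have h1 : φ 1 = F y := by simp [φ]
  rw [h0, h1] at hle; linarith

lemma grad_mono {W : Type*} [NormedAddCommGroup W] [InnerProductSpace ℝ W]
    [CompleteSpace W] {F : W → ℝ} (hF : ConvexOn ℝ Set.univ F)
    {gradF : W → W} (hg : ∀ ψ, HasGradientAt F (gradF ψ) ψ) (x y : W) :
    0 ≤ ⟪gradF x - gradF y, x - y⟫ := by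
  have h1 := convex_grad_ineq hF (hg x) y
  have h2 := convex_grad_ineq hF (hg y) x
  have e : ⟪gradF x - gradF y, x - y⟫ = -⟪gradF x, y - x⟫ - ⟪gradF y, x - y⟫ := by
    rw [inner_sub_left]
    have : ⟪gradF x, y - x⟫ = -⟪gradF x, x - y⟫ := by rw [← inner_neg_right]; congr 1; abel
    rw [this]; ring
  rw [e]; linarith


lemma quad_hasGradientAt {W : Type*} [NormedAddCommGroup W] [InnerProductSpace ℝ W]
    [CompleteSpace W] (P : W →L[ℝ] W) (x : W) :
    HasGradientAt (fun ψ : W => (1/2 : ℝ) * ⟪P ψ, ψ⟫)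
      ((1/2 : ℝ) • (P x + ContinuousLinearMap.adjoint P x)) x := by
  rw [hasGradientAt_iff_isLittleO]
  have key : ∀ x' : W, (fun x' => (1/2 : ℝ) * ⟪P x', x'⟫ - (1/2 : ℝ) * ⟪P x, x⟫
      - ⟪(1/2 : ℝ) • (P x + ContinuousLinearMap.adjoint P x), x' - x⟫) x'
      = (1/2 : ℝ) * ⟪P (x' - x), x' - x⟫ := by
    intro x'
    simp only [inner_smul_left, inner_add_left, map_sub, inner_sub_left, inner_sub_right,
      ContinuousLinearMap.adjoint_inner_left, starRingEnd_apply, star_trivial]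
    have h1 : ⟪x, P x'⟫ = ⟪P x', x⟫ := real_inner_comm _ _
    have h2 : ⟪x, P x⟫ = ⟪P x, x⟫ := real_inner_comm _ _
    ring_nf
    nlinarith [h1, h2]
  rw [show (fun x' => (1/2 : ℝ) * ⟪P x', x'⟫ - (1/2 : ℝ) * ⟪P x, x⟫
      - ⟪(1/2 : ℝ) • (P x + ContinuousLinearMap.adjoint P x), x' - x⟫)
      = fun x' => (1/2 : ℝ) * ⟪P (x' - x), x' - x⟫ from funext key]
  rw [Asymptotics.isLittleO_iff]
  intro c hc
  have hδ : 0 < 2 * c / (‖P‖ + 1) := by positivity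
  filter_upwards [Metric.ball_mem_nhds x hδ] with x' hx'
  rw [Metric.mem_ball, dist_eq_norm] at hx'
  have h1 : |⟪P (x' - x), x' - x⟫| ≤ ‖P‖ * ‖x' - x‖ * ‖x' - x‖ := by
    calc |⟪P (x' - x), x' - x⟫| ≤ ‖P (x' - x)‖ * ‖x' - x‖ := abs_real_inner_le_norm _ _
    _ ≤ ‖P‖ * ‖x' - x‖ * ‖x' - x‖ := by
        have := P.le_opNorm (x' - x)
        nlinarith [norm_nonneg (x' - x)]
  have hPn : (0:ℝ) ≤ ‖P‖ := norm_nonneg _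
  have hn : (0:ℝ) ≤ ‖x' - x‖ := norm_nonneg _
  rw [Real.norm_eq_abs, abs_mul]
  have : |(1/2 : ℝ)| = 1/2 := by norm_num
  rw [this]
  have hq : ‖x' - x‖ * (‖P‖ + 1) < 2 * c := by
    rwa [lt_div_iff₀ (by positivity : (0:ℝ) < ‖P‖ + 1)] at hx'
  nlinarith [h1, mul_le_mul_of_nonneg_left hq.le hn]

lemma resolvent_exists {W : Type*} [NormedAddCommGroup W] [InnerProductSpace ℝ W]
    [FiniteDimensional ℝ W]
    (P : W →L[ℝ] W) (c : ℝ) (hc : 0 < c) (hP : ∀ ψ : W, c * ‖ψ‖ ^ 2 ≤ ⟪P ψ, ψ⟫)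
    {F : W → ℝ} (hF : ConvexOn ℝ Set.univ F) {gradF : W → W}
    (hg : ∀ ψ, HasGradientAt F (gradF ψ) ψ) (r : W) :
    ∃ ψ : W, (1/2 : ℝ) • (P ψ + ContinuousLinearMap.adjoint P ψ) + gradF ψ = r := by
  set G : W → ℝ := fun ψ => (1/2 : ℝ) * ⟪P ψ, ψ⟫ + F ψ - ⟪r, ψ⟫ with hG
  -- gradient of G
  have hGgrad : ∀ ψ : W, HasGradientAt G
      ((1/2 : ℝ) • (P ψ + ContinuousLinearMap.adjoint P ψ) + gradF ψ - r) ψ := by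
    intro ψ
    have h1 := hasGradientAt_iff_hasFDerivAt.mp (quad_hasGradientAt P ψ)
    have h2 := hasGradientAt_iff_hasFDerivAt.mp (hg ψ)
    have h3 : HasFDerivAt (fun ψ : W => ⟪r, ψ⟫)
        (InnerProductSpace.toDual ℝ W r) ψ := by
      have := (InnerProductSpace.toDual ℝ W r).hasFDerivAt (x := ψ)
      exact this.congr_fderiv rfl
    rw [hasGradientAt_iff_hasFDerivAt]
    have h4 := (h1.add h2).sub h3
    simpa [hG, one_div, map_add, map_sub, Pi.add_def, Pi.sub_def] using h4
  -- continuity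
  have hFcont : Continuous F := by
    rw [continuous_iff_continuousAt]
    exact fun ψ => ((hg ψ).differentiableAt).continuousAt
  have hGcont : Continuous G := by
    apply Continuous.sub
    · exact (continuous_const.mul (continuous_inner.comp
        (P.continuous.prodMk continuous_id))).add hFcont
    · exact continuous_inner.comp (continuous_const.prodMk continuous_id)
  -- lower bound
  set K : ℝ := ‖gradF 0‖ + ‖r‖ + |F 0| + 1 with hK
  have hK1 : (1:ℝ) ≤ K := by
    have := norm_nonneg (gradF 0); have := norm_nonneg r; have := abs_nonneg (F 0)
    simp only [hK]; linarith
  have hlb : ∀ ψ : W, (c/2) * ‖ψ‖^2 - K * ‖ψ‖ - K ≤ G ψ := by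
    intro ψ
    have h1 : (c/2) * ‖ψ‖^2 ≤ (1/2 : ℝ) * ⟪P ψ, ψ⟫ := by
      have := hP ψ; linarith
    have h2 : F 0 - ‖gradF 0‖ * ‖ψ‖ ≤ F ψ := by
      have := convex_grad_ineq hF (hg 0) ψ
      have hb : |⟪gradF 0, ψ - 0⟫| ≤ ‖gradF 0‖ * ‖ψ‖ := by
        simpa using abs_real_inner_le_norm (gradF 0) ψ
      have := abs_le.mp hb
      linarith [this.1]
    have h3 : ⟪r, ψ⟫ ≤ ‖r‖ * ‖ψ‖ := by
      have := abs_le.mp (abs_real_inner_le_norm r ψ); linarith [this.2]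
    have h4 : -|F 0| ≤ F 0 := neg_abs_le _
    have hn : (0:ℝ) ≤ ‖ψ‖ := norm_nonneg _
    have h9 : (‖gradF 0‖ + ‖r‖) * ‖ψ‖ ≤ K * ‖ψ‖ := by
      apply mul_le_mul_of_nonneg_right _ hn
      have := abs_nonneg (F 0); simp only [hK]; linarith
    have h10 : |F 0| ≤ K := by
      have := norm_nonneg (gradF 0); have := norm_nonneg r
      simp only [hK]; linarith
    simp only [hG]
    nlinarith
  -- coercivity radius
  set Rad : ℝ := (K+1)/(c/2) + |G 0| + K + 1 with hRad
  have hRadpos : 0 < Rad := by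
    have : 0 < (K+1)/(c/2) := by positivity
    have := abs_nonneg (G 0); simp only [hRad]; linarith
  clear_value K Rad
  have hout : ∀ ψ : W, Rad < ‖ψ‖ → G 0 < G ψ := by
    intro ψ hψ
    have hlbψ := hlb ψ
    have hn : (0:ℝ) ≤ ‖ψ‖ := norm_nonneg _
    have h5 : (K+1)/(c/2) ≤ ‖ψ‖ := by
      have : 0 ≤ |G 0| + K + 1 := by positivity
      simp only [hRad] at hψ; linarith
    have h6 : K + 1 ≤ (c/2) * ‖ψ‖ := by
      rw [div_le_iff₀ (by positivity : (0:ℝ) < c/2)] at h5; linarith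
    have h7 : |G 0| + K + 1 < ‖ψ‖ := by
      have : 0 ≤ (K+1)/(c/2) := by positivity
      simp only [hRad] at hψ; linarith
    have h8 : G 0 ≤ |G 0| := le_abs_self _
    have h9 : (K+1) * ‖ψ‖ ≤ c/2 * ‖ψ‖^2 := by
      nlinarith [mul_le_mul_of_nonneg_right h6 hn]
    have h10 : ‖ψ‖ - K ≤ G ψ := by
      have h11 : ‖ψ‖ - K ≤ c / 2 * ‖ψ‖ ^ 2 - K * ‖ψ‖ - K := by nlinarith [h9]
      exact le_trans h11 hlbψ
    linarith [h10, h7, h8]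
  -- minimize over closed ball
  obtain ⟨x0, hx0mem, hx0min⟩ := (isCompact_closedBall (0:W) Rad).exists_isMinOn
    ⟨0, by simp [le_of_lt hRadpos]⟩ hGcont.continuousOn
  have hglobal : ∀ y : W, G x0 ≤ G y := by
    intro y
    by_cases hy : y ∈ Metric.closedBall (0:W) Rad
    · exact hx0min hy
    · have : Rad < ‖y‖ := by
        simpa [Metric.mem_closedBall, dist_zero_right, not_le] using hy
      have h0 : G x0 ≤ G 0 := hx0min (by simp [le_of_lt hRadpos])
      exact le_of_lt (lt_of_le_of_lt h0 (hout y this))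
  have hloc : IsLocalMin G x0 := Filter.Eventually.of_forall hglobal
  have hzero := hloc.hasFDerivAt_eq_zero (hasGradientAt_iff_hasFDerivAt.mp (hGgrad x0))
  have : (1/2 : ℝ) • (P x0 + ContinuousLinearMap.adjoint P x0) + gradF x0 - r = 0 := by
    have := congrArg (InnerProductSpace.toDual ℝ W).symm hzero
    simpa using this
  exact ⟨x0, by linear_combination (norm := module) this⟩

lemma riesz_vec {V : Type*} [NormedAddCommGroup V] [InnerProductSpace ℝ V]
    [FiniteDimensional ℝ V] (l : V →ₗ[ℝ] ℝ) : ∃ x : V, ∀ v, ⟪x, v⟫ = l v :=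
  ⟨(InnerProductSpace.toDual ℝ V).symm (LinearMap.toContinuousLinearMap l), fun v => by
    simp [InnerProductSpace.toDual_symm_apply]⟩

lemma riesz_bilin {X V : Type*} [AddCommGroup X] [Module ℝ X] [NormedAddCommGroup V]
    [InnerProductSpace ℝ V] [FiniteDimensional ℝ V] (T : X →ₗ[ℝ] V →ₗ[ℝ] ℝ) :
    ∃ T' : X →ₗ[ℝ] V, ∀ x v, ⟪T' x, v⟫ = T x v := by
  choose f hf using fun x => riesz_vec (T x)
  refine ⟨{ toFun := f, map_add' := ?_, map_smul' := ?_ }, hf⟩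
  · intro a b; apply ext_inner_right ℝ; intro v
    simp [hf, inner_add_left]
  · intro t a; apply ext_inner_right ℝ; intro v
    simp [hf, real_inner_smul_left]

/-- Well-posedness of the proximal Galerkin subproblem for a non-symmetric
coercive bilinear form: in finite dimensions, under the inf-sup condition on `b`
and for a convex differentiable `F`, the coupled system
`α·A(u, v) + b(v, ψ) = ℓ(v)` and `b(u, w) = ⟨∇F(ψ), w⟩` has a unique solution. -/
theorem statement4
    {V W : Type*} [NormedAddCommGroup V] [InnerProductSpace ℝ V] [FiniteDimensional ℝ V]
    [NormedAddCommGroup W] [InnerProductSpace ℝ W] [FiniteDimensional ℝ W]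
    (A : V →ₗ[ℝ] V →ₗ[ℝ] ℝ) (C : ℝ) (hC : 0 < C)
    (hAcoer : ∀ v : V, C * ‖v‖ ^ 2 ≤ A v v)
    (b : V →ₗ[ℝ] W →ₗ[ℝ] ℝ) (μ : ℝ) (hμ : 0 < μ)
    (hinfsup : ∀ w : W, w ≠ 0 → ∃ v : V, v ≠ 0 ∧ μ * ‖v‖ * ‖w‖ ≤ b v w)
    (F : W → ℝ) (hFconv : ConvexOn ℝ Set.univ F)
    (gradF : W → W) (hgrad : ∀ ψ : W, HasGradientAt F (gradF ψ) ψ)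
    (α : ℝ) (hα : 0 < α) (l : V →ₗ[ℝ] ℝ) :
    ∃! p : V × W, (∀ v : V, α * A p.1 v + b v p.2 = l v) ∧
      (∀ w : W, b p.1 w = ⟪gradF p.2, w⟫) := by
  obtain ⟨Ahat, hA⟩ := riesz_bilin A
  obtain ⟨Bop, hB⟩ := riesz_bilin b
  obtain ⟨Bt, hBtv'⟩ := riesz_bilin b.flip
  have hBtv : ∀ (x : W) (v : V), ⟪Bt x, v⟫ = b v x := fun x v => by
    rw [hBtv', LinearMap.flip_apply]
  obtain ⟨lsharp, hl⟩ := riesz_vec l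
  -- Ahat is bijective
  have hAinj : Function.Injective Ahat := by
    rw [← LinearMap.ker_eq_bot, LinearMap.ker_eq_bot']
    intro u hu
    have h1 : A u u = 0 := by rw [← hA, hu, inner_zero_left]
    have h2 := hAcoer u
    rw [h1] at h2
    have h3 : ‖u‖ ^ 2 ≤ 0 := by nlinarith [sq_nonneg ‖u‖]
    have h4 : ‖u‖ * ‖u‖ = 0 := by nlinarith [sq_nonneg ‖u‖]
    exact norm_eq_zero.mp (mul_self_eq_zero.mp h4)
  have hAbij : Function.Bijective Ahat :=
    ⟨hAinj, (LinearMap.injective_iff_surjective).mp hAinj⟩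
  obtain ⟨eA, heA⟩ : ∃ e : V ≃ₗ[ℝ] V, ∀ v, e v = Ahat v :=
    ⟨LinearEquiv.ofBijective Ahat hAbij, fun _ => rfl⟩
  have heAs : ∀ x : V, Ahat (eA.symm x) = x := fun x => by
    rw [← heA]; exact eA.apply_symm_apply x
  -- reduced operator
  obtain ⟨Slin, hSdef⟩ : ∃ S : W →ₗ[ℝ] W, ∀ ψ, S ψ = α⁻¹ • Bop (eA.symm (Bt ψ)) :=
    ⟨α⁻¹ • (Bop ∘ₗ (eA.symm : V ≃ₗ[ℝ] V).toLinearMap ∘ₗ Bt), fun ψ => rfl⟩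
  set f0 : W := α⁻¹ • Bop (eA.symm lsharp) with hf0
  set U : W → V := fun ψ => α⁻¹ • eA.symm (lsharp - Bt ψ) with hU
  -- system equivalence
  have hsys : ∀ u : V, ∀ ψ : W,
      ((∀ v : V, α * A u v + b v ψ = l v) ∧ (∀ w : W, b u w = ⟪gradF ψ, w⟫))
      ↔ (u = U ψ ∧ Slin ψ + gradF ψ = f0) := by
    intro u ψ
    have heq1 : (∀ v : V, α * A u v + b v ψ = l v) ↔ u = U ψ := by
      constructor
      · intro h
        have hop : Ahat (α • u) = lsharp - Bt ψ := by
          apply ext_inner_right ℝ; intro v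
          rw [hA, map_smul, inner_sub_left, hl, hBtv]
          have := h v
          simp only [LinearMap.smul_apply, smul_eq_mul]
          linarith
        have : α • u = eA.symm (lsharp - Bt ψ) := by
          rw [← hop, ← heA, eA.symm_apply_apply]
        rw [hU]
        simp only [← this, smul_smul, inv_mul_cancel₀ (ne_of_gt hα), one_smul]
      · intro h v
        have hu : α • u = eA.symm (lsharp - Bt ψ) := by
          rw [h, hU]
          simp only [smul_smul, mul_inv_cancel₀ (ne_of_gt hα), one_smul]
        have hop : Ahat (α • u) = lsharp - Bt ψ := by rw [hu, heAs]
        have h2 := congrArg (fun x => ⟪x, v⟫) hop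
        rw [hA, map_smul, inner_sub_left, hl, hBtv] at h2
        simp only [LinearMap.smul_apply, smul_eq_mul] at h2
        linarith
    have heq2 : (∀ w : W, b u w = ⟪gradF ψ, w⟫) ↔ Bop u = gradF ψ := by
      constructor
      · intro h; apply ext_inner_right ℝ; intro w; rw [hB]; exact h w
      · intro h w; rw [← hB, h]
    rw [heq1, heq2]
    constructor
    · rintro ⟨hu, h2⟩
      refine ⟨hu, ?_⟩
      have hBu : Bop u = f0 - Slin ψ := by
        rw [hu, hU]
        simp only [map_smul, map_sub, hSdef, hf0, smul_sub]
      rw [← h2, hBu]; abel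
    · rintro ⟨hu, h2⟩
      refine ⟨hu, ?_⟩
      have hBu : Bop u = f0 - Slin ψ := by
        rw [hu, hU]
        simp only [map_smul, map_sub, hSdef, hf0, smul_sub]
      rw [hBu, ← h2]; abel
  -- nonnegativity and definiteness of Slin
  have hSinner : ∀ ψ : W, ⟪Slin ψ, ψ⟫ = α⁻¹ * A (eA.symm (Bt ψ)) (eA.symm (Bt ψ)) := by
    intro ψ
    rw [hSdef, real_inner_smul_left, hB]
    congr 1
    have : b (eA.symm (Bt ψ)) ψ = ⟪Bt ψ, eA.symm (Bt ψ)⟫ := (hBtv ψ _).symm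
    rw [this, ← heAs (Bt ψ), hA]
    rw [heAs]
  have hBtzero : ∀ ψ : W, Bt ψ = 0 → ψ = 0 := by
    intro ψ h
    by_contra hne
    obtain ⟨v, hv, hbv⟩ := hinfsup ψ hne
    have : b v ψ = 0 := by rw [← hBtv, h, inner_zero_left]
    rw [this] at hbv
    have h1 : 0 < ‖v‖ := norm_pos_iff.mpr hv
    have h2 : 0 < ‖ψ‖ := norm_pos_iff.mpr hne
    nlinarith [mul_pos (mul_pos hμ h1) h2]
  have hSpos : ∀ ψ : W, ψ ≠ 0 → 0 < ⟪Slin ψ, ψ⟫ := by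
    intro ψ hne
    rw [hSinner]
    have hv : eA.symm (Bt ψ) ≠ 0 := by
      intro h
      apply hne
      apply hBtzero
      have := heAs (Bt ψ)
      rw [h, map_zero] at this
      exact this.symm
    have h1 := hAcoer (eA.symm (Bt ψ))
    have h2 : 0 < ‖eA.symm (Bt ψ)‖ := norm_pos_iff.mpr hv
    have h3 : 0 < α⁻¹ := by positivity
    have h4 : 0 < A (eA.symm (Bt ψ)) (eA.symm (Bt ψ)) :=
      lt_of_lt_of_le (mul_pos hC (pow_pos h2 2)) h1
    nlinarith [mul_pos h3 h4]
  -- uniform coercivity via compactness of the sphere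
  have hScoer : ∃ c : ℝ, 0 < c ∧ ∀ ψ : W, c * ‖ψ‖ ^ 2 ≤ ⟪Slin ψ, ψ⟫ := by
    rcases subsingleton_or_nontrivial W with hsub | hnt
    · exact ⟨1, one_pos, fun ψ => by
        rw [Subsingleton.elim ψ 0]; simp⟩
    · have hcont : Continuous (fun ψ : W => ⟪Slin ψ, ψ⟫) := by
        have h1 : Continuous (fun ψ : W => Slin ψ) := Slin.continuous_of_finiteDimensional
        exact continuous_inner.comp (h1.prodMk continuous_id)
      have hsph : (Metric.sphere (0:W) 1).Nonempty := NormedSpace.sphere_nonempty.mpr zero_le_one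
      obtain ⟨ψ0, hψ0mem, hψ0min⟩ := (isCompact_sphere (0:W) 1).exists_isMinOn hsph
        hcont.continuousOn
      have hψ0n : ‖ψ0‖ = 1 := by simpa [dist_zero_right] using hψ0mem
      have hψ0ne : ψ0 ≠ 0 := by intro h; rw [h, norm_zero] at hψ0n; norm_num at hψ0n
      refine ⟨⟪Slin ψ0, ψ0⟫, hSpos ψ0 hψ0ne, fun ψ => ?_⟩
      rcases eq_or_ne ψ 0 with h | h
      · simp [h]
      · have hn : 0 < ‖ψ‖ := norm_pos_iff.mpr h
        have hmem : ‖ψ‖⁻¹ • ψ ∈ Metric.sphere (0:W) 1 := by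
          simp [norm_smul, abs_of_pos (inv_pos.mpr hn), inv_mul_cancel₀ (ne_of_gt hn)]
        have := hψ0min hmem
        simp only [Set.mem_setOf_eq] at this
        have hval : ⟪Slin (‖ψ‖⁻¹ • ψ), ‖ψ‖⁻¹ • ψ⟫ = ‖ψ‖⁻¹ * ‖ψ‖⁻¹ * ⟪Slin ψ, ψ⟫ := by
          rw [map_smul, real_inner_smul_left, real_inner_smul_right]; ring
        rw [hval] at this
        have h2 : ⟪Slin ψ0, ψ0⟫ * ‖ψ‖ ^ 2 ≤ ⟪Slin ψ, ψ⟫ := by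
          have h3 := mul_le_mul_of_nonneg_left this (le_of_lt (mul_pos hn hn))
          have h4 : ‖ψ‖ * ‖ψ‖ * (‖ψ‖⁻¹ * ‖ψ‖⁻¹ * ⟪Slin ψ, ψ⟫) = ⟪Slin ψ, ψ⟫ := by
            field_simp
          rw [h4] at h3
          nlinarith [h3]
        exact h2
  obtain ⟨c, hcpos, hSc⟩ := hScoer
  -- solve the reduced problem Slin ψ + gradF ψ = f0
  have hred : ∃! ψ : W, Slin ψ + gradF ψ = f0 := by
    -- uniqueness via strict monotonicity
    have huniq : ∀ ψ1 ψ2 : W, Slin ψ1 + gradF ψ1 = Slin ψ2 + gradF ψ2 → ψ1 = ψ2 := by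
      intro ψ1 ψ2 h
      have h1 : Slin (ψ1 - ψ2) + (gradF ψ1 - gradF ψ2) = 0 := by
        rw [map_sub]
        linear_combination (norm := module) h
      have h2 : ⟪Slin (ψ1 - ψ2), ψ1 - ψ2⟫ + ⟪gradF ψ1 - gradF ψ2, ψ1 - ψ2⟫ = 0 := by
        rw [← inner_add_left, h1, inner_zero_left]
      have h3 := hSc (ψ1 - ψ2)
      have h4 := grad_mono hFconv hgrad ψ1 ψ2
      have h5 : ‖ψ1 - ψ2‖ * ‖ψ1 - ψ2‖ = 0 := by nlinarith [sq_nonneg ‖ψ1 - ψ2‖]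
      have h6 : ψ1 - ψ2 = 0 := norm_eq_zero.mp (mul_self_eq_zero.mp h5)
      exact sub_eq_zero.mp h6
    -- continuous-linear-map versions
    set Sc : W →L[ℝ] W := LinearMap.toContinuousLinearMap Slin with hScdef
    have hScapp : ∀ ψ : W, Sc ψ = Slin ψ := by
      intro ψ
      rw [hScdef]
      simp
    set Nsk : W →L[ℝ] W := (1/2 : ℝ) • (Sc - ContinuousLinearMap.adjoint Sc) with hNdef
    set τ : ℝ := ‖Nsk‖^2 / (2*c) + c with hτ
    have hτpos : 0 < τ := by positivity
    have hcτ : 0 < c + τ := by linarith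
    set P : W →L[ℝ] W := Sc + τ • ContinuousLinearMap.id ℝ W with hPdef
    have hPapp : ∀ ψ : W, P ψ = Slin ψ + τ • ψ := by
      intro ψ
      rw [hPdef]
      simp [hScapp]
    have hPcoer : ∀ ψ : W, (c + τ) * ‖ψ‖ ^ 2 ≤ ⟪P ψ, ψ⟫ := by
      intro ψ
      rw [hPapp, inner_add_left, real_inner_smul_left, real_inner_self_eq_norm_sq]
      have h := hSc ψ
      nlinarith [h]
    have hadjP : ∀ ψ : W, ContinuousLinearMap.adjoint P ψ
        = ContinuousLinearMap.adjoint Sc ψ + τ • ψ := by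
      intro ψ
      have h1 : ContinuousLinearMap.adjoint P
          = ContinuousLinearMap.adjoint Sc + τ • ContinuousLinearMap.id ℝ W := by
        rw [hPdef, map_add, map_smulₛₗ]
        simp [ContinuousLinearMap.adjoint_id, starRingEnd_apply]
      rw [h1]
      simp
    have hQS : ∀ ψ : W, (1/2 : ℝ) • (P ψ + ContinuousLinearMap.adjoint P ψ)
        = Slin ψ + (τ • ψ - Nsk ψ) := by
      intro ψ
      rw [hPapp, hadjP, hNdef]
      simp only [ContinuousLinearMap.smul_apply, ContinuousLinearMap.sub_apply, hScapp]
      module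
    have hNskew : ∀ ψ : W, ⟪Nsk ψ, ψ⟫ = 0 := by
      intro ψ
      rw [hNdef]
      simp only [ContinuousLinearMap.smul_apply, ContinuousLinearMap.sub_apply]
      rw [real_inner_smul_left, inner_sub_left, ContinuousLinearMap.adjoint_inner_left,
        real_inner_comm ψ (Sc ψ)]
      ring
    have hD : ∀ x : W, ‖τ • x - Nsk x‖ ^ 2 ≤ (τ^2 + ‖Nsk‖^2) * ‖x‖ ^ 2 := by
      intro x
      rw [norm_sub_sq_real]
      have h1 : ⟪τ • x, Nsk x⟫ = 0 := by
        rw [real_inner_smul_left, real_inner_comm, hNskew]; ring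
      have h2 : ‖τ • x‖ ^ 2 = τ^2 * ‖x‖ ^ 2 := by
        rw [norm_smul, Real.norm_eq_abs, mul_pow, sq_abs]
      rw [h1, h2]
      have h3 := Nsk.le_opNorm x
      nlinarith [norm_nonneg (Nsk x), norm_nonneg x, norm_nonneg Nsk]
    -- the resolvent
    have hres : ∀ r : W, ∃ ψ : W,
        (1/2 : ℝ) • (P ψ + ContinuousLinearMap.adjoint P ψ) + gradF ψ = r :=
      fun r => resolvent_exists P (c + τ) hcτ hPcoer hFconv hgrad r
    choose R hRspec using hres
    have hReq : ∀ r : W, Slin (R r) + (τ • R r - Nsk (R r)) + gradF (R r) = r := by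
      intro r
      rw [← hQS]
      exact hRspec r
    have hRlip : ∀ r1 r2 : W,
        (c + τ) * ‖R r1 - R r2‖ ^ 2 ≤ ‖r1 - r2‖ * ‖R r1 - R r2‖ := by
      intro r1 r2
      set d := R r1 - R r2 with hdd
      have h1 : Slin d + (τ • d - Nsk d) + (gradF (R r1) - gradF (R r2)) = r1 - r2 := by
        have e1 := hReq r1
        have e2 := hReq r2
        rw [hdd, map_sub, map_sub, smul_sub]
        linear_combination (norm := module) e1 - e2
      have h2 := congrArg (fun x : W => ⟪x, d⟫) h1
      simp only [inner_add_left, inner_sub_left, real_inner_smul_left] at h2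
      have h3 := hSc d
      have h5 := hNskew d
      have h6 : ⟪r1, d⟫ - ⟪r2, d⟫ ≤ ‖r1 - r2‖ * ‖d‖ := by
        rw [← inner_sub_left]; exact real_inner_le_norm _ _
      have h7 : ⟪d, d⟫ = ‖d‖ ^ 2 := real_inner_self_eq_norm_sq d
      have h8 : (0:ℝ) ≤ ⟪gradF (R r1), d⟫ - ⟪gradF (R r2), d⟫ := by
        rw [← inner_sub_left, hdd]
        exact grad_mono hFconv hgrad (R r1) (R r2)
      nlinarith [h2, h3, h5, h6, h7, h8]
    -- the contraction
    set k : ℝ := Real.sqrt (τ^2 + ‖Nsk‖^2) / (c + τ) with hk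
    have hknn : 0 ≤ k := by positivity
    have hΘlip : ∀ ψ1 ψ2 : W,
        ‖R (f0 + (τ • ψ1 - Nsk ψ1)) - R (f0 + (τ • ψ2 - Nsk ψ2))‖ ≤ k * ‖ψ1 - ψ2‖ := by
      intro ψ1 ψ2
      set r1 := f0 + (τ • ψ1 - Nsk ψ1) with hr1
      set r2 := f0 + (τ • ψ2 - Nsk ψ2) with hr2
      have hdr : r1 - r2 = τ • (ψ1 - ψ2) - Nsk (ψ1 - ψ2) := by
        rw [hr1, hr2, map_sub, smul_sub]; abel
      have h1 : ‖r1 - r2‖ ≤ Real.sqrt (τ^2 + ‖Nsk‖^2) * ‖ψ1 - ψ2‖ := by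
        rw [hdr]
        have h2 := hD (ψ1 - ψ2)
        have h3 : ‖τ • (ψ1 - ψ2) - Nsk (ψ1 - ψ2)‖
            = Real.sqrt (‖τ • (ψ1 - ψ2) - Nsk (ψ1 - ψ2)‖ ^ 2) :=
          (Real.sqrt_sq (norm_nonneg _)).symm
        rw [h3]
        calc Real.sqrt (‖τ • (ψ1 - ψ2) - Nsk (ψ1 - ψ2)‖ ^ 2)
            ≤ Real.sqrt ((τ^2 + ‖Nsk‖^2) * ‖ψ1 - ψ2‖ ^ 2) := Real.sqrt_le_sqrt h2
          _ = Real.sqrt (τ^2 + ‖Nsk‖^2) * ‖ψ1 - ψ2‖ := by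
              rw [Real.sqrt_mul (by positivity), Real.sqrt_sq (norm_nonneg _)]
      have h4 := hRlip r1 r2
      rcases eq_or_lt_of_le (norm_nonneg (R r1 - R r2)) with h5 | h5
      · rw [← h5]; positivity
      · have h6 : (c + τ) * ‖R r1 - R r2‖ ≤ ‖r1 - r2‖ := by
          have h7' : ((c + τ) * ‖R r1 - R r2‖) * ‖R r1 - R r2‖
              ≤ ‖r1 - r2‖ * ‖R r1 - R r2‖ := by nlinarith [h4]
          exact le_of_mul_le_mul_right h7' h5
        rw [hk]
        rw [div_mul_eq_mul_div, le_div_iff₀ hcτ]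
        calc ‖R r1 - R r2‖ * (c + τ) = (c + τ) * ‖R r1 - R r2‖ := by ring
          _ ≤ ‖r1 - r2‖ := h6
          _ ≤ Real.sqrt (τ^2 + ‖Nsk‖^2) * ‖ψ1 - ψ2‖ := h1
    have hklt : k < 1 := by
      rw [hk, div_lt_one hcτ]
      rw [Real.sqrt_lt' hcτ]
      have h2cτ : 2 * c * τ = ‖Nsk‖^2 + 2 * c^2 := by
        rw [hτ]; field_simp
      nlinarith [sq_nonneg ‖Nsk‖, sq_nonneg c]
    -- Banach fixed point
    set Θ : W → W := fun ψ => R (f0 + (τ • ψ - Nsk ψ)) with hΘ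
    have hlips : LipschitzWith (Real.toNNReal k) Θ := by
      apply LipschitzWith.of_dist_le_mul
      intro x y
      rw [dist_eq_norm, dist_eq_norm, Real.coe_toNNReal k hknn]
      exact hΘlip x y
    have hcontr : ContractingWith (Real.toNNReal k) Θ := by
      refine ⟨?_, hlips⟩
      rw [← NNReal.coe_lt_coe, Real.coe_toNNReal k hknn, NNReal.coe_one]
      exact hklt
    haveI : Nonempty W := ⟨0⟩
    have hfp := ContractingWith.fixedPoint_isFixedPt hcontr
    set ψs := ContractingWith.fixedPoint Θ hcontr with hψsdef
    have hψfix : Θ ψs = ψs := hfp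
    have hψsol : Slin ψs + gradF ψs = f0 := by
      have h1 := hReq (f0 + (τ • ψs - Nsk ψs))
      rw [show R (f0 + (τ • ψs - Nsk ψs)) = ψs from hψfix] at h1
      linear_combination (norm := module) h1
    exact ⟨ψs, hψsol, fun ψ hψ => huniq ψ ψs (by rw [hψ, hψsol])⟩
  obtain ⟨ψs, hψs, hψuniq⟩ := hred
  refine ⟨(U ψs, ψs), ?_, ?_⟩
  · exact (hsys (U ψs) ψs).mpr ⟨rfl, hψs⟩
  · rintro ⟨u, ψ⟩ hp
    obtain ⟨hu, hψ⟩ := (hsys u ψ).mp hp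
    have : ψ = ψs := hψuniq ψ hψ
    subst this
    simp [hu]
end

section
/- Let X and Y be finite-dimensional real inner product spaces, a : X × X → ℝ a symmetric bilinear form with a(x,x) ≥ C·‖x‖² for all x (C > 0), ℓ : X → ℝ linear, F : Y → ℝ convex and differentiable with gradient ∇F : Y → Y, and b : X × Y → ℝ bilinear satisfying the inf-sup condition: there is μ > 0 such that for every nonzero φ ∈ Y there exists a nonzero x ∈ X with b(x, φ) ≥ μ·‖x‖·‖φ‖. Define L(w, φ) = (1/2)·a(w,w) − ℓ(w) + b(w, φ) − F(φ). Then L admits a saddle point (u, ψ) ∈ X × Y, i.e. L(u, φ) ≤ L(u, ψ) ≤ L(w, ψ) for all w ∈ X and φ ∈ Y, and every saddle point (u, ψ) satisfies a(u, v) + b(v, ψ) = ℓ(v) for all v ∈ X and b(u, w) = ⟨∇F(ψ), w⟩ for all w ∈ Y. -/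
open scoped RealInnerProductSpace Topology

lemma subgrad_aux {Y : Type*} [NormedAddCommGroup Y] [InnerProductSpace ℝ Y]
    [CompleteSpace Y] {F : Y → ℝ} (hF : ConvexOn ℝ Set.univ F)
    {g x : Y} (h : HasGradientAt F g x) (y : Y) : ⟪g, y - x⟫ ≤ F y - F x := by
  set v := y - x with hv
  have hline : HasDerivAt (fun t : ℝ => F (x + t • v)) ⟪g, v⟫ 0 := by
    have hc : HasDerivAt (fun t : ℝ => x + t • v) v 0 := by
      simpa using ((hasDerivAt_id (0:ℝ)).smul_const v).const_add x
    have hF' : HasFDerivAt F ((InnerProductSpace.toDual ℝ Y) g) (x + (0:ℝ) • v) := by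
      simpa using h.hasFDerivAt
    have := hF'.comp_hasDerivAt 0 hc
    simpa [InnerProductSpace.toDual_apply_apply, Function.comp_def] using this
  have hslope : Filter.Tendsto (slope (fun t : ℝ => F (x + t • v)) 0) (𝓝[>] 0) (𝓝 ⟪g, v⟫) :=
    (hasDerivAt_iff_tendsto_slope.1 hline).mono_left
      (nhdsWithin_mono 0 (fun t ht => ne_of_gt ht))
  refine le_of_tendsto hslope ?_
  filter_upwards [Ioc_mem_nhdsGT one_pos] with t ht
  have h0 : (0:ℝ) < t := ht.1
  have h1 : t ≤ 1 := ht.2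
  have hcvx := hF.2 (Set.mem_univ y) (Set.mem_univ x) (le_of_lt h0) (by linarith)
    (by ring : t + (1 - t) = 1)
  have hpt : t • y + (1 - t) • x = x + t • v := by
    simp [hv, smul_sub, sub_smul]; abel
  rw [hpt] at hcvx
  have : slope (fun t : ℝ => F (x + t • v)) 0 t = (F (x + t • v) - F x) / t := by
    simp [slope_def_field, div_eq_inv_mul]
  rw [this]
  rw [div_le_iff₀ h0]
  simp only [smul_eq_mul] at hcvx
  nlinarith [hcvx]

set_option maxHeartbeats 1000000 in
/-- The Lagrangian `L(w, φ) = ½·a(w,w) − ℓ(w) + b(w,φ) − F(φ)` of the symmetric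
regularized proximal Galerkin subproblem admits a saddle point, and every saddle
point `(u, ψ)` satisfies the optimality system
`a(u,v) + b(v,ψ) = ℓ(v)` and `b(u,w) = ⟨∇F(ψ), w⟩`. -/
theorem statement5
    {X Y : Type*} [NormedAddCommGroup X] [InnerProductSpace ℝ X] [FiniteDimensional ℝ X]
    [NormedAddCommGroup Y] [InnerProductSpace ℝ Y] [FiniteDimensional ℝ Y]
    (a : X →ₗ[ℝ] X →ₗ[ℝ] ℝ) (hasymm : ∀ x y : X, a x y = a y x)
    (C : ℝ) (hC : 0 < C) (hacoer : ∀ x : X, C * ‖x‖ ^ 2 ≤ a x x)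
    (l : X →ₗ[ℝ] ℝ)
    (F : Y → ℝ) (hFconv : ConvexOn ℝ Set.univ F)
    (gradF : Y → Y) (hgrad : ∀ φ : Y, HasGradientAt F (gradF φ) φ)
    (b : X →ₗ[ℝ] Y →ₗ[ℝ] ℝ) (μ : ℝ) (hμ : 0 < μ)
    (hinfsup : ∀ φ : Y, φ ≠ 0 → ∃ x : X, x ≠ 0 ∧ μ * ‖x‖ * ‖φ‖ ≤ b x φ)
    (L : X → Y → ℝ)
    (hL : ∀ (w : X) (φ : Y), L w φ = (1 / 2) * a w w - l w + b w φ - F φ) :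
    (∃ (u : X) (ψ : Y), (∀ φ : Y, L u φ ≤ L u ψ) ∧ (∀ w : X, L u ψ ≤ L w ψ)) ∧
      (∀ (u : X) (ψ : Y),
        ((∀ φ : Y, L u φ ≤ L u ψ) ∧ (∀ w : X, L u ψ ≤ L w ψ)) →
          (∀ v : X, a u v + b v ψ = l v) ∧ (∀ w : Y, b u w = ⟪gradF ψ, w⟫)) := by
  classical
  -- Riesz representation map on X
  set RX : (X →ₗ[ℝ] ℝ) →ₗ[ℝ] X :=
    ((InnerProductSpace.toDual ℝ X).symm.toLinearEquiv.toLinearMap).comp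
      (LinearMap.toContinuousLinearMap : (X →ₗ[ℝ] ℝ) ≃ₗ[ℝ] (X →L[ℝ] ℝ)).toLinearMap
    with hRXdef
  have hRX : ∀ (f : X →ₗ[ℝ] ℝ) (v : X), ⟪RX f, v⟫ = f v := by
    intro f v
    simp [hRXdef, InnerProductSpace.toDual_symm_apply]
  -- the operator associated to `a`
  set T : X →ₗ[ℝ] X := RX.comp a with hTdef
  have hT : ∀ x v : X, ⟪T x, v⟫ = a x v := fun x v => hRX (a x) v
  have hTinj : Function.Injective T := by
    intro x₁ x₂ hx
    have hker : ∀ x : X, T x = 0 → x = 0 := by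
      intro x hx0
      have h1 : a x x = 0 := by rw [← hT x x, hx0, inner_zero_left]
      have h2 := hacoer x
      have h3 : ‖x‖ ^ 2 ≤ 0 := by nlinarith
      have h4 : ‖x‖ = 0 := by nlinarith [norm_nonneg x, sq_nonneg ‖x‖]
      simpa using h4
    exact sub_eq_zero.mp (hker (x₁ - x₂) (by rw [map_sub, hx, sub_self]))
  have hTsurj : Function.Surjective T := LinearMap.injective_iff_surjective.mp hTinj
  set Te : X ≃ₗ[ℝ] X := LinearEquiv.ofBijective T ⟨hTinj, hTsurj⟩ with hTedef
  have hTe : ∀ x : X, T (Te.symm x) = x := by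
    intro x
    have : Te (Te.symm x) = x := Te.apply_symm_apply x
    exact this
  -- the solution operator `S` : `a (S ψ) v = b v ψ`
  set S : Y →ₗ[ℝ] X := Te.symm.toLinearMap.comp (RX.comp b.flip) with hSdef
  have hS : ∀ (ψ : Y) (v : X), a (S ψ) v = b v ψ := by
    intro ψ v
    have h1 : T (S ψ) = RX (b.flip ψ) := hTe _
    rw [← hT, h1, hRX]
    rfl
  -- the particular solution `u0` : `a u0 v = l v`
  set u0 : X := Te.symm (RX l) with hu0def
  have hu0 : ∀ v : X, a u0 v = l v := by
    intro v
    rw [← hT, hTe, hRX]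
  clear_value RX T Te S u0
  -- system implies saddle point
  have key : ∀ (u : X) (ψ : Y), (∀ v, a u v + b v ψ = l v) → (∀ w, b u w = ⟪gradF ψ, w⟫) →
      (∀ φ, L u φ ≤ L u ψ) ∧ (∀ w, L u ψ ≤ L w ψ) := by
    intro u ψ h1 h2
    constructor
    · intro φ
      rw [hL, hL]
      have hg := subgrad_aux hFconv (hgrad ψ) φ
      have hb : (b u) (φ - ψ) = ⟪gradF ψ, φ - ψ⟫ := h2 _
      rw [map_sub] at hb
      linarith
    · intro w
      rw [hL, hL]
      have hv := h1 (w - u)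
      have e1 : a u (w - u) = a u w - a u u := by rw [map_sub]
      have e2 : b (w - u) ψ = b w ψ - b u ψ := by rw [map_sub, LinearMap.sub_apply]
      have e3 : l (w - u) = l w - l u := map_sub _ _ _
      have e4 : a (w - u) (w - u) = a w w - 2 * a u w + a u u := by
        simp only [map_sub, LinearMap.sub_apply]
        rw [hasymm w u]; ring
      have e5 : 0 ≤ a (w - u) (w - u) := le_trans (by positivity) (hacoer _)
      rw [e1] at hv
      rw [e2] at hv
      rw [e3] at hv
      linarith
  -- saddle point implies system
  have nec : ∀ (u : X) (ψ : Y),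
      ((∀ φ, L u φ ≤ L u ψ) ∧ (∀ w, L u ψ ≤ L w ψ)) →
        (∀ v, a u v + b v ψ = l v) ∧ (∀ w, b u w = ⟪gradF ψ, w⟫) := by
    rintro u ψ ⟨hmax, hmin⟩
    constructor
    · intro v
      set c : ℝ := a u v + b v ψ - l v with hcdef
      have hA : 0 ≤ a v v := le_trans (by positivity) (hacoer v)
      have ht : ∀ t : ℝ, 0 ≤ t * c + t ^ 2 / 2 * a v v := by
        intro t
        have hmm := hmin (u + t • v)
        rw [hL, hL] at hmm
        have ea : a (u + t • v) (u + t • v) = a u u + 2 * t * a u v + t ^ 2 * a v v := by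
          simp only [map_add, map_smul, LinearMap.add_apply, LinearMap.smul_apply, smul_eq_mul]
          rw [hasymm v u]; ring
        have el : l (u + t • v) = l u + t * l v := by
          simp [map_add, map_smul]
        have eb : b (u + t • v) ψ = b u ψ + t * b v ψ := by
          simp [map_add, map_smul, LinearMap.add_apply, LinearMap.smul_apply]
        rw [ea, el, eb] at hmm
        nlinarith [hmm]
      have hpos : 0 < a v v + 1 := by linarith
      have h1 := ht (-2 * c / (a v v + 1))
      have hcz : c = 0 := by
        have h5 : -2 * c / (a v v + 1) * c + (-2 * c / (a v v + 1)) ^ 2 / 2 * a v v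
            = -2 * c ^ 2 / (a v v + 1) ^ 2 := by
          field_simp
          ring
        rw [h5] at h1
        rw [le_div_iff₀ (by positivity)] at h1
        have h6 : c ^ 2 ≤ 0 := by nlinarith [h1]
        have h7 : c ^ 2 = 0 := le_antisymm h6 (sq_nonneg c)
        exact pow_eq_zero_iff (two_ne_zero) |>.mp h7
      linarith [hcz]
    · have hlocal : IsLocalMin (fun φ => F φ - b u φ) ψ := by
        apply Filter.Eventually.of_forall
        intro φ
        have hh := hmax φ
        rw [hL, hL] at hh
        simp only
        linarith
      have hfd : HasFDerivAt (fun φ => F φ - b u φ)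
          ((InnerProductSpace.toDual ℝ Y) (gradF ψ) - LinearMap.toContinuousLinearMap (b u)) ψ :=
        (hgrad ψ).hasFDerivAt.sub (LinearMap.toContinuousLinearMap (b u)).hasFDerivAt
      have h0 := hlocal.hasFDerivAt_eq_zero hfd
      intro w
      have h1 := ContinuousLinearMap.ext_iff.mp h0 w
      simp only [ContinuousLinearMap.sub_apply, InnerProductSpace.toDual_apply_apply,
        LinearMap.coe_toContinuousLinearMap', ContinuousLinearMap.zero_apply] at h1
      linarith
  refine ⟨?_, nec⟩
  -- Existence: minimize the dual functional
  -- bound on `a`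
  set Tc : X →L[ℝ] X := LinearMap.toContinuousLinearMap T with hTcdef
  set Ka : ℝ := ‖Tc‖ + 1 with hKadef
  have hKapos : 0 < Ka := by positivity
  have haineq : ∀ x v : X, a x v ≤ Ka * ‖x‖ * ‖v‖ := by
    intro x v
    rw [← hT]
    calc ⟪T x, v⟫ ≤ ‖T x‖ * ‖v‖ := real_inner_le_norm _ _
      _ ≤ Ka * ‖x‖ * ‖v‖ := by
        have h1 : ‖T x‖ = ‖Tc x‖ := by rw [hTcdef]; simp
        have h2 : ‖Tc x‖ ≤ ‖Tc‖ * ‖x‖ := Tc.le_opNorm x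
        have h3 : ‖Tc‖ * ‖x‖ ≤ Ka * ‖x‖ := by
          apply mul_le_mul_of_nonneg_right _ (norm_nonneg x)
          rw [hKadef]; linarith
        nlinarith [norm_nonneg v, norm_nonneg (T x), h2, h3, h1,
          mul_le_mul_of_nonneg_right (h1 ▸ h2.trans h3) (norm_nonneg v)]
  have hSlow : ∀ ψ : Y, μ * ‖ψ‖ ≤ Ka * ‖S ψ‖ := by
    intro ψ
    by_cases hψ : ψ = 0
    · simp [hψ]
    · obtain ⟨x, hx0, hbx⟩ := hinfsup ψ hψ
      have h1 : b x ψ = a (S ψ) x := (hS ψ x).symm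
      have h2 : a (S ψ) x ≤ Ka * ‖S ψ‖ * ‖x‖ := haineq _ _
      have hxpos : 0 < ‖x‖ := norm_pos_iff.2 hx0
      rw [h1] at hbx
      nlinarith [hbx.trans h2, hxpos]
  -- coercivity of the quadratic part
  set c0 : ℝ := C * (μ / Ka) ^ 2 with hc0def
  have hc0 : 0 < c0 := by rw [hc0def]; positivity
  have hq : ∀ ψ : Y, c0 * ‖ψ‖ ^ 2 ≤ a (S ψ) (S ψ) := by
    intro ψ
    have h1 := hSlow ψ
    have h2 := hacoer (S ψ)
    have hμψ : 0 ≤ μ * ‖ψ‖ := by positivity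
    have hsq : (μ * ‖ψ‖) ^ 2 ≤ (Ka * ‖S ψ‖) ^ 2 := by nlinarith [norm_nonneg (S ψ)]
    have hKa2 : (0:ℝ) < Ka ^ 2 := by positivity
    have hexp : c0 * ‖ψ‖ ^ 2 * Ka ^ 2 = C * (μ * ‖ψ‖) ^ 2 := by
      rw [hc0def]; field_simp
    nlinarith [mul_le_mul_of_nonneg_left hsq (le_of_lt hC), hKa2, h2]
  -- lower bound on F
  have hFlb : ∀ φ : Y, F 0 - ‖gradF 0‖ * ‖φ‖ ≤ F φ := by
    intro φ
    have h1 := subgrad_aux hFconv (hgrad 0) φ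
    rw [sub_zero] at h1
    have h2 := abs_real_inner_le_norm (gradF 0) φ
    linarith [neg_abs_le ⟪gradF 0, φ⟫]
  -- bound on `b u0`
  set Kb : ℝ := ‖LinearMap.toContinuousLinearMap (b u0)‖ with hKbdef
  have hKbnn : 0 ≤ Kb := norm_nonneg _
  have hKb : ∀ ψ : Y, b u0 ψ ≤ Kb * ‖ψ‖ := by
    intro ψ
    have h1 := (LinearMap.toContinuousLinearMap (b u0)).le_opNorm ψ
    simp only [LinearMap.coe_toContinuousLinearMap'] at h1
    calc b u0 ψ ≤ |b u0 ψ| := le_abs_self _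
      _ = ‖b u0 ψ‖ := (Real.norm_eq_abs _).symm
      _ ≤ Kb * ‖ψ‖ := h1
  -- the dual functional
  set J : Y → ℝ := fun ψ => F ψ - b u0 ψ + (1 / 2) * a (S ψ) (S ψ) with hJdef
  have hJ0 : J 0 = F 0 := by
    simp [hJdef]
  set M : ℝ := ‖gradF 0‖ + Kb with hMdef
  have hM : 0 ≤ M := by rw [hMdef]; positivity
  have hJlb : ∀ ψ : Y, F 0 - M * ‖ψ‖ + c0 / 2 * ‖ψ‖ ^ 2 ≤ J ψ := by
    intro ψ
    have h1 := hFlb ψ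
    have h2 := hKb ψ
    have h3 := hq ψ
    rw [hJdef, hMdef]
    simp only
    nlinarith [h1, h2, h3]
  set R : ℝ := 2 * M / c0 + 1 with hRdef
  have hRpos : 0 < R := by rw [hRdef]; positivity
  have hRc : c0 * R = 2 * M + c0 := by rw [hRdef]; field_simp
  clear_value Tc Ka c0 Kb M J R
  clear hRXdef hTdef hTedef hSdef hu0def hTcdef hKadef hc0def hKbdef hMdef hRdef
  have hout : ∀ ψ : Y, R < ‖ψ‖ → J 0 < J ψ := by
    intro ψ hn
    have h1 := hJlb ψ
    have hnpos : 0 < ‖ψ‖ := lt_trans hRpos hn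
    have h2 : c0 * R < c0 * ‖ψ‖ := (mul_lt_mul_iff_right₀ hc0).2 hn
    have h3 : 2 * M + c0 < c0 * ‖ψ‖ := by linarith
    have h4 : (2 * M + c0) * ‖ψ‖ < c0 * ‖ψ‖ * ‖ψ‖ := (mul_lt_mul_iff_left₀ hnpos).2 h3
    have h5 : 0 < c0 * ‖ψ‖ := mul_pos hc0 hnpos
    rw [hJ0]
    nlinarith [h1, h4, h5]
  -- continuity of J
  have hFcont : Continuous F := by
    rw [continuous_iff_continuousAt]
    exact fun φ => (hgrad φ).hasFDerivAt.continuousAt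
  have hScont : Continuous S := S.continuous_of_finiteDimensional
  have hTcont : Continuous T := T.continuous_of_finiteDimensional
  have hq2cont : Continuous (fun ψ : Y => a (S ψ) (S ψ)) := by
    have heq : (fun ψ : Y => a (S ψ) (S ψ)) = fun ψ : Y => ⟪T (S ψ), S ψ⟫ := by
      funext ψ; rw [hT]
    rw [heq]
    exact (hTcont.comp hScont).inner hScont
  have hbu0cont : Continuous (fun ψ : Y => b u0 ψ) := (b u0).continuous_of_finiteDimensional
  have hJcont : Continuous J := by
    rw [hJdef]
    exact (hFcont.sub hbu0cont).add (continuous_const.mul hq2cont)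
  -- minimize J on a big closed ball
  have hball : IsCompact (Metric.closedBall (0:Y) R) := isCompact_closedBall 0 R
  obtain ⟨ψ0, hψ0mem, hψ0min⟩ := hball.exists_isMinOn
    ⟨0, Metric.mem_closedBall_self (le_of_lt hRpos)⟩ hJcont.continuousOn
  have hglobal : ∀ φ : Y, J ψ0 ≤ J φ := by
    intro φ
    by_cases hφ : φ ∈ Metric.closedBall (0:Y) R
    · exact isMinOn_iff.mp hψ0min φ hφ
    · have hn : R < ‖φ‖ := by
        by_contra hcon
        exact hφ (by simpa [Metric.mem_closedBall, dist_zero_right] using not_lt.mp hcon)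
      exact le_trans (isMinOn_iff.mp hψ0min 0 (Metric.mem_closedBall_self (le_of_lt hRpos)))
        (le_of_lt (hout φ hn))
  -- first-order condition at ψ0
  set Sc : Y →L[ℝ] X := LinearMap.toContinuousLinearMap S with hScdef
  set TSc : Y →L[ℝ] X := LinearMap.toContinuousLinearMap (T ∘ₗ S) with hTScdef
  have hJeq : J = fun ψ : Y => F ψ - (LinearMap.toContinuousLinearMap (b u0)) ψ
      + (1 / 2) * ⟪TSc ψ, Sc ψ⟫ := by
    funext ψ
    rw [hJdef]
    simp only [hScdef, hTScdef, LinearMap.coe_toContinuousLinearMap', LinearMap.comp_apply]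
    rw [hT]
  have hfdJ : HasFDerivAt J
      (((InnerProductSpace.toDual ℝ Y) (gradF ψ0) - LinearMap.toContinuousLinearMap (b u0))
        + (1 / 2 : ℝ) • ((fderivInnerCLM ℝ (TSc ψ0, Sc ψ0)).comp (TSc.prod Sc))) ψ0 := by
    rw [hJeq]
    exact ((hgrad ψ0).hasFDerivAt.sub (LinearMap.toContinuousLinearMap (b u0)).hasFDerivAt).add
      ((TSc.hasFDerivAt.inner ℝ Sc.hasFDerivAt).const_mul (1 / 2 : ℝ))
  have hloc : IsLocalMin J ψ0 := Filter.Eventually.of_forall hglobal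
  have hzero := hloc.hasFDerivAt_eq_zero hfdJ
  have heval : ∀ w : Y, ⟪gradF ψ0, w⟫ - b u0 w
      + (1 / 2) * (⟪TSc ψ0, Sc w⟫ + ⟪TSc w, Sc ψ0⟫) = 0 := by
    intro w
    have h1 := ContinuousLinearMap.ext_iff.mp hzero w
    simpa [ContinuousLinearMap.add_apply, ContinuousLinearMap.sub_apply,
      ContinuousLinearMap.smul_apply, ContinuousLinearMap.comp_apply,
      ContinuousLinearMap.prod_apply, fderivInnerCLM_apply,
      InnerProductSpace.toDual_apply_apply, LinearMap.coe_toContinuousLinearMap',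
      smul_eq_mul, mul_add] using h1
  have hsys2 : ∀ w : Y, b (u0 - S ψ0) w = ⟪gradF ψ0, w⟫ := by
    intro w
    have h1 := heval w
    have e1 : ⟪TSc ψ0, Sc w⟫ = b (S ψ0) w := by
      simp only [hTScdef, hScdef, LinearMap.coe_toContinuousLinearMap', LinearMap.comp_apply]
      rw [hT, hasymm, hS]
    have e2 : ⟪TSc w, Sc ψ0⟫ = b (S ψ0) w := by
      simp only [hTScdef, hScdef, LinearMap.coe_toContinuousLinearMap', LinearMap.comp_apply]
      rw [hT, hS]
    rw [map_sub, LinearMap.sub_apply]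
    rw [e1, e2] at h1
    linarith
  have hsys1 : ∀ v : X, a (u0 - S ψ0) v + b v ψ0 = l v := by
    intro v
    rw [map_sub, LinearMap.sub_apply, hu0, hS]
    ring
  exact ⟨u0 - S ψ0, ψ0, key _ _ hsys1 hsys2⟩
end

section
/- Let V and W be real Hilbert spaces, V_h ⊆ V and W_h ⊆ W subspaces, B : V → W a bounded linear map, A : V × V → ℝ bilinear with A(v,v) ≥ C·‖v‖² for all v (C > 0), f a continuous linear functional on V, and F : W → ℝ convex and differentiable with gradient ∇F : W → W. Let α > 0 and suppose u ∈ V_h, u₀ ∈ V_h and ψ, ψ⁻, ψ₀ ∈ W_h satisfy: (i) α·A(u, v) + ⟨B v, ψ − ψ⁻⟩ = α·f(v) for v = u − u₀; (ii) ⟨B u − ∇F(ψ), w⟩ = 0 and ⟨B u₀ − ∇F(ψ₀), w⟩ = 0 for w = ψ − ψ⁻. Then, with the Bregman distance D(χ, φ) := F(χ) − F(φ) − ⟨∇F(φ), χ − φ⟩, one has C·α·‖u‖² + D(ψ, ψ₀) − D(ψ⁻, ψ₀) ≤ α·(A(u, u₀) + f(u − u₀)). -/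
open scoped RealInnerProductSpace

lemma grad_convex_ineq {W : Type*} [NormedAddCommGroup W] [InnerProductSpace ℝ W]
    [CompleteSpace W] (F : W → ℝ) (hF : ConvexOn ℝ Set.univ F)
    (x y g : W) (hg : HasGradientAt F g x) :
    F x + ⟪g, y - x⟫ ≤ F y := by
  rcases eq_or_ne y x with rfl | hne
  · simp
  · -- restrict to the line
    set L : ℝ →ᵃ[ℝ] W := AffineMap.lineMap x y
    have hG : ConvexOn ℝ Set.univ (F ∘ L) := by
      have := hF.comp_affineMap L
      simpa using this
    have hcurve : HasDerivAt (fun t : ℝ => L t) (y - x) 0 := by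
      have h1 : HasDerivAt (fun t : ℝ => t • (y - x)) (y - x) 0 := by
        simpa using (hasDerivAt_id (0 : ℝ)).smul_const (y - x)
      have h2 : HasDerivAt (fun t : ℝ => t • (y - x) + x) (y - x) 0 := h1.add_const x
      simpa [L, AffineMap.lineMap_apply] using h2
    have hfd : HasFDerivAt F (InnerProductSpace.toDual ℝ W g : W →L[ℝ] ℝ) x :=
      hg.hasFDerivAt
    have hL0 : L 0 = x := by simp [L]
    have hGderiv : HasDerivAt (F ∘ L) ⟪g, y - x⟫ 0 := by
      rw [← hL0] at hfd
      have := hfd.comp_hasDerivAt (x := (0 : ℝ)) (f := fun t : ℝ => L t) hcurve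
      simpa [InnerProductSpace.toDual_apply_apply] using this
    have h01 : (0 : ℝ) < 1 := one_pos
    have := hG.le_slope_of_hasDerivAt (Set.mem_univ (0 : ℝ)) (Set.mem_univ (1 : ℝ)) h01 hGderiv
    rw [slope_def_field] at this
    have hL1 : L 1 = y := by simp [L]
    simp only [Function.comp_apply, hL0, hL1] at this
    have : ⟪g, y - x⟫ ≤ F y - F x := by
      simpa [div_one] using this
    linarith

/-- Per-iteration energy inequality of the conforming proximal Galerkin scheme:
with the Bregman distance `D(χ, φ) = F(χ) − F(φ) − ⟨∇F(φ), χ − φ⟩`, one step of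
the scheme satisfies
`C·α·‖u‖² + D(ψ, ψ₀) − D(ψ⁻, ψ₀) ≤ α·(A(u, u₀) + f(u − u₀))`. -/
theorem statement6
    {V W : Type*} [NormedAddCommGroup V] [InnerProductSpace ℝ V] [CompleteSpace V]
    [NormedAddCommGroup W] [InnerProductSpace ℝ W] [CompleteSpace W]
    (Vh : Submodule ℝ V) (Wh : Submodule ℝ W)
    (B : V →L[ℝ] W)
    (A : V →ₗ[ℝ] V →ₗ[ℝ] ℝ) (C : ℝ) (hC : 0 < C)
    (hAcoer : ∀ v : V, C * ‖v‖ ^ 2 ≤ A v v)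
    (f : V →L[ℝ] ℝ)
    (F : W → ℝ) (hFconv : ConvexOn ℝ Set.univ F)
    (gradF : W → W) (hgrad : ∀ φ : W, HasGradientAt F (gradF φ) φ)
    (α : ℝ) (hα : 0 < α)
    (u u0 : V) (hu : u ∈ Vh) (hu0 : u0 ∈ Vh)
    (ψ ψm ψ0 : W) (hψ : ψ ∈ Wh) (hψm : ψm ∈ Wh) (hψ0 : ψ0 ∈ Wh)
    (hi : α * A u (u - u0) + ⟪B (u - u0), ψ - ψm⟫ = α * f (u - u0))
    (hii1 : ⟪B u - gradF ψ, ψ - ψm⟫ = 0)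
    (hii2 : ⟪B u0 - gradF ψ0, ψ - ψm⟫ = 0)
    (D : W → W → ℝ) (hD : ∀ χ φ : W, D χ φ = F χ - F φ - ⟪gradF φ, χ - φ⟫) :
    C * α * ‖u‖ ^ 2 + D ψ ψ0 - D ψm ψ0 ≤ α * (A u u0 + f (u - u0)) := by
  -- key gradient inequality: F ψ - F ψm ≤ ⟪gradF ψ, ψ - ψm⟫
  have hgradineq : F ψ + ⟪gradF ψ, ψm - ψ⟫ ≤ F ψm :=
    grad_convex_ineq F hFconv ψ ψm (gradF ψ) (hgrad ψ)
  -- inner product identities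
  have e1 : ⟪B u, ψ - ψm⟫ = ⟪gradF ψ, ψ - ψm⟫ := by
    have := hii1; rw [inner_sub_left] at this; linarith
  have e2 : ⟪B u0, ψ - ψm⟫ = ⟪gradF ψ0, ψ - ψm⟫ := by
    have := hii2; rw [inner_sub_left] at this; linarith
  have eB : ⟪B (u - u0), ψ - ψm⟫ = ⟪gradF ψ, ψ - ψm⟫ - ⟪gradF ψ0, ψ - ψm⟫ := by
    rw [map_sub, inner_sub_left, e1, e2]
  -- Bregman difference
  have hDdiff : D ψ ψ0 - D ψm ψ0 = F ψ - F ψm - ⟪gradF ψ0, ψ - ψm⟫ := by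
    rw [hD, hD]
    have : ⟪gradF ψ0, ψ - ψ0⟫ - ⟪gradF ψ0, ψm - ψ0⟫ = ⟪gradF ψ0, ψ - ψm⟫ := by
      rw [← inner_sub_right]; congr 1; abel
    linarith
  have hmono : ⟪gradF ψ, ψm - ψ⟫ = -⟪gradF ψ, ψ - ψm⟫ := by
    rw [← inner_neg_right]; congr 1; abel
  have key : D ψ ψ0 - D ψm ψ0 ≤ ⟪B (u - u0), ψ - ψm⟫ := by
    rw [hDdiff, eB]
    rw [hmono] at hgradineq
    linarith
  -- coercivity
  have hA : A u (u - u0) = A u u - A u u0 := by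
    rw [map_sub]
  have hcoer : C * ‖u‖ ^ 2 ≤ A u u := hAcoer u
  have hαcoer : C * α * ‖u‖ ^ 2 ≤ α * A u u := by
    calc C * α * ‖u‖ ^ 2 = α * (C * ‖u‖ ^ 2) := by ring
    _ ≤ α * A u u := by exact mul_le_mul_of_nonneg_left hcoer hα.le
  rw [hA] at hi
  nlinarith [key, hαcoer]
end

section
/- Let V and W be real Hilbert spaces, V_h ⊆ V and W_h ⊆ W subspaces, B : V → W a bounded linear map, A : V × V → ℝ bilinear with |A(u,v)| ≤ M·‖u‖·‖v‖ for all u, v, and f a continuous linear functional on V with operator norm ‖f‖. Let α_k > 0 (1 ≤ k ≤ ℓ), ψ₀ ∈ W_h, and let (u_k, ψ_k) ∈ V_h × W_h satisfy α_k·A(u_k, v) + ⟨B v, ψ_k − ψ_{k−1}⟩ = α_k·f(v) for all v ∈ V_h and all 1 ≤ k ≤ ℓ. Set ū_ℓ = (Σ_{k=1}^ℓ α_k u_k)/(Σ_{k=1}^ℓ α_k) and λ̄_ℓ = (ψ₀ − ψ_ℓ)/(Σ_{k=1}^ℓ α_k). If there is μ > 0 such that for every nonzero w ∈ W_h there is a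 nonzero v ∈ V_h with ⟨B v, w⟩ ≥ μ·‖v‖·‖w‖, then μ·‖λ̄_ℓ‖ ≤ M·‖ū_ℓ‖ + ‖f‖. -/
open scoped RealInnerProductSpace

/-- Stability of the averaged dual variable `λ̄_ℓ = (ψ₀ − ψ_ℓ)/(Σ α_k)` of the
proximal Galerkin scheme: under the discrete inf-sup condition with constant `μ`,
one has `μ·‖λ̄_ℓ‖ ≤ M·‖ū_ℓ‖ + ‖f‖`. -/
theorem statement8
    {V W : Type*} [NormedAddCommGroup V] [InnerProductSpace ℝ V] [CompleteSpace V]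
    [NormedAddCommGroup W] [InnerProductSpace ℝ W] [CompleteSpace W]
    (Vh : Submodule ℝ V) (Wh : Submodule ℝ W)
    (B : V →L[ℝ] W)
    (A : V →ₗ[ℝ] V →ₗ[ℝ] ℝ) (M : ℝ)
    (hAbdd : ∀ u v : V, |A u v| ≤ M * ‖u‖ * ‖v‖)
    (f : V →L[ℝ] ℝ)
    (ℓ : ℕ) (hℓ : 1 ≤ ℓ)
    (α : ℕ → ℝ) (hα : ∀ k, 1 ≤ k → k ≤ ℓ → 0 < α k)
    (u : ℕ → V) (ψ : ℕ → W)
    (humem : ∀ k, 1 ≤ k → k ≤ ℓ → u k ∈ Vh)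
    (hψmem : ∀ k, k ≤ ℓ → ψ k ∈ Wh)
    (hscheme : ∀ k, 1 ≤ k → k ≤ ℓ → ∀ v ∈ Vh,
      α k * A (u k) v + ⟪B v, ψ k - ψ (k - 1)⟫ = α k * f v)
    (ubar : V)
    (hubar : ubar =
      (∑ k ∈ Finset.Icc 1 ℓ, α k)⁻¹ • ∑ k ∈ Finset.Icc 1 ℓ, α k • u k)
    (lambar : W)
    (hlambar : lambar = (∑ k ∈ Finset.Icc 1 ℓ, α k)⁻¹ • (ψ 0 - ψ ℓ))
    (μ : ℝ) (hμ : 0 < μ)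
    (hinfsup : ∀ w ∈ Wh, w ≠ 0 → ∃ v ∈ Vh, v ≠ 0 ∧ μ * ‖v‖ * ‖w‖ ≤ ⟪B v, w⟫) :
    μ * ‖lambar‖ ≤ M * ‖ubar‖ + ‖f‖ := by
  set S : ℝ := ∑ k ∈ Finset.Icc 1 ℓ, α k with hSdef
  have hS : 0 < S := by
    apply Finset.sum_pos
    · intro k hk
      simp only [Finset.mem_Icc] at hk
      exact hα k hk.1 hk.2
    · exact ⟨1, by simp [Finset.mem_Icc, hℓ]⟩
  -- nonnegativity of M * ‖ubar‖
  have hMub : 0 ≤ M * ‖ubar‖ := by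
    rcases eq_or_ne ubar 0 with h | h
    · simp [h]
    · have h1 : 0 ≤ M * ‖ubar‖ * ‖ubar‖ := (abs_nonneg _).trans (hAbdd ubar ubar)
      have h2 : 0 < ‖ubar‖ := norm_pos_iff.mpr h
      nlinarith
  rcases eq_or_ne lambar 0 with h0 | h0
  · simp only [h0, norm_zero, mul_zero]
    linarith [norm_nonneg f]
  -- key identity: ⟪B v, lambar⟫ = A ubar v - f v for v ∈ Vh
  have hkey : ∀ v ∈ Vh, ⟪B v, lambar⟫ = A ubar v - f v := by
    intro v hv
    have htel : ∀ n : ℕ, ∑ k ∈ Finset.Icc 1 n, (ψ k - ψ (k - 1)) = ψ n - ψ 0 := by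
      intro n
      induction n with
      | zero => simp
      | succ m ih =>
        rw [Finset.sum_Icc_succ_top (by omega : 1 ≤ m + 1), ih]
        show ψ m - ψ 0 + (ψ (m + 1) - ψ m) = ψ (m + 1) - ψ 0
        abel
    have hsum : ∑ k ∈ Finset.Icc 1 ℓ, (α k * A (u k) v) + ⟪B v, ψ ℓ - ψ 0⟫
        = S * f v := by
      have hterm : ∀ k ∈ Finset.Icc 1 ℓ,
          α k * A (u k) v + ⟪B v, ψ k - ψ (k - 1)⟫ = α k * f v := by
        intro k hk
        rw [Finset.mem_Icc] at hk
        exact hscheme k hk.1 hk.2 v hv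
      have := Finset.sum_congr rfl hterm
      rw [Finset.sum_add_distrib, ← inner_sum, htel ℓ] at this
      rw [this, hSdef, Finset.sum_mul]
    have hA : A ubar v = S⁻¹ * ∑ k ∈ Finset.Icc 1 ℓ, (α k * A (u k) v) := by
      rw [hubar, map_smul, map_sum, LinearMap.smul_apply, LinearMap.coe_sum,
        Finset.sum_apply, smul_eq_mul]
      congr 1
      refine Finset.sum_congr rfl (fun k _ => ?_)
      rw [map_smul, LinearMap.smul_apply, smul_eq_mul]
    have hinner : ⟪B v, lambar⟫ = S⁻¹ * ⟪B v, ψ 0 - ψ ℓ⟫ := by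
      rw [hlambar, real_inner_smul_right]
    have hflip : ⟪B v, ψ 0 - ψ ℓ⟫ = -⟪B v, ψ ℓ - ψ 0⟫ := by
      rw [← inner_neg_right]; congr 1; abel
    rw [hinner, hflip]
    have : ⟪B v, ψ ℓ - ψ 0⟫ = S * f v - ∑ k ∈ Finset.Icc 1 ℓ, (α k * A (u k) v) := by
      linarith [hsum]
    rw [this, hA]
    field_simp
    ring
  -- membership of lambar in Wh
  have hmem : lambar ∈ Wh := by
    rw [hlambar]
    exact Wh.smul_mem _ (Wh.sub_mem (hψmem 0 (by omega)) (hψmem ℓ le_rfl))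
  obtain ⟨v, hv, hv0, hle⟩ := hinfsup lambar hmem h0
  have hvpos : 0 < ‖v‖ := norm_pos_iff.mpr hv0
  have h1 : ⟪B v, lambar⟫ = A ubar v - f v := hkey v hv
  have h2 : A ubar v ≤ M * ‖ubar‖ * ‖v‖ := (le_abs_self _).trans (hAbdd ubar v)
  have h3 : -f v ≤ ‖f‖ * ‖v‖ := by
    have habs : |f v| ≤ ‖f‖ * ‖v‖ := by
      simpa [Real.norm_eq_abs] using f.le_opNorm v
    linarith [neg_abs_le (f v)]
  have : μ * ‖v‖ * ‖lambar‖ ≤ M * ‖ubar‖ * ‖v‖ + ‖f‖ * ‖v‖ := by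
    rw [h1] at hle
    linarith
  nlinarith [norm_nonneg lambar]
end

section
/- Let V and W be real Hilbert spaces, V_h ⊆ V and W_h ⊆ W subspaces, B : V → W bounded linear, A : V × V → ℝ bilinear with A(v,v) ≥ C·‖v‖² (C > 0), f a continuous linear functional on V, K ⊆ V nonempty closed convex, u* ∈ K a solution of the variational inequality A(u*, v − u*) ≥ f(v − u*) for all v ∈ K, and Π : V → V_h a linear (Fortin) map with ⟨B(v − Π v), w⟩ = 0 for all v ∈ V and w ∈ W_h. Let S ⊆ W be convex, R : W → ℝ convex on S, α_k > 0, and suppose for every k ≥ 1 there are u_k ∈ V_h, ψ_k, ψ_{k−1} ∈ W_h and o_k, o_{k−1} ∈ S such that R is differentiable at o_k and o_{k−1} with gradients ∇R(o_k) = ψ_k and ∇R(o_{k−1}) = ψ_{k−1}, ⟨o_k − B u_k, w⟩ = 0 for all w ∈ W_h, o* := B u* ∈ S, and α_k·A(u_k, v) + ⟨B v, ψ_k − ψ_{k−1}⟩ = α_k·f(v) for all v ∈ V_h. Then, writing D(p, q) := R(p) − R(q) − ⟨∇R(q), p − q⟩ and e_k := u_k − Π u*, one has for every k: D(o*, o_k)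 + α_k·A(e_k, e_k) ≤ D(o*, o_{k−1}) − α_k·A(Π u*, e_k) + α_k·f(e_k). -/
open scoped RealInnerProductSpace

lemma grad_ineq_aux {W : Type*} [NormedAddCommGroup W] [InnerProductSpace ℝ W]
    [CompleteSpace W] {S : Set W} {R : W → ℝ} (hR : ConvexOn ℝ S R) {p q g : W}
    (hp : p ∈ S) (hq : q ∈ S) (hg : HasGradientAt R g q) :
    ⟪g, p - q⟫ ≤ R p - R q := by
  set φ : ℝ → ℝ := fun t => R (q + t • (p - q)) with hφdef
  have hline : HasDerivAt (fun s : ℝ => q + s • (p - q)) (p - q) 0 := by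
    simpa using ((hasDerivAt_id (0:ℝ)).smul_const (p - q)).const_add q
  have hφ : HasDerivAt φ ⟪g, p - q⟫ 0 := by
    have hg' : HasFDerivAt R (InnerProductSpace.toDual ℝ W g) (q + (0:ℝ) • (p - q)) := by
      simpa using hg.hasFDerivAt
    have h := hg'.comp_hasDerivAt 0 hline
    have h2 := by simpa [InnerProductSpace.toDual_apply_apply] using h
    exact h2
  have hslope : ∀ t ∈ Set.Ioc (0:ℝ) 1, slope φ 0 t ≤ R p - R q := by
    intro t ht
    have hconv := hR.2 hq hp (show (0:ℝ) ≤ 1 - t by linarith [ht.2]) ht.1.le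
        (by ring : (1 - t) + t = 1)
    have hpt : (1 - t) • q + t • p = q + t • (p - q) := by module
    rw [hpt] at hconv
    have hφ0 : φ 0 = R q := by simp [φ]
    rw [slope_def_field, sub_zero, div_le_iff₀ ht.1]
    have : φ t ≤ (1 - t) * R q + t * R p := hconv
    nlinarith [this, hφ0]
  have htend : Filter.Tendsto (slope φ 0) (nhdsWithin 0 (Set.Ioi 0)) (nhds ⟪g, p - q⟫) := by
    have h := hasDerivAt_iff_tendsto_slope.mp hφ
    exact h.mono_left (nhdsWithin_mono _ (fun x hx => ne_of_gt hx))
  refine le_of_tendsto htend ?_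
  filter_upwards [Ioc_mem_nhdsGT_of_mem (by norm_num : (0:ℝ) ∈ Set.Ico (0:ℝ) 1)] with t ht
  exact hslope t ht

/-- Per-iteration Bregman descent inequality of the conforming proximal Galerkin
scheme: with `D(p, q) = R(p) − R(q) − ⟨∇R(q), p − q⟩`, `o* = B u*` and
`e_k = u_k − Π u*`, for every `k ≥ 1` one has
`D(o*, o_k) + α_k·A(e_k, e_k) ≤ D(o*, o_{k−1}) − α_k·A(Π u*, e_k) + α_k·f(e_k)`. -/
theorem statement9
    {V W : Type*} [NormedAddCommGroup V] [InnerProductSpace ℝ V] [CompleteSpace V]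
    [NormedAddCommGroup W] [InnerProductSpace ℝ W] [CompleteSpace W]
    (Vh : Submodule ℝ V) (Wh : Submodule ℝ W)
    (B : V →L[ℝ] W)
    (A : V →ₗ[ℝ] V →ₗ[ℝ] ℝ) (C : ℝ) (hC : 0 < C)
    (hAcoer : ∀ v : V, C * ‖v‖ ^ 2 ≤ A v v)
    (f : V →L[ℝ] ℝ)
    (K : Set V) (hKne : K.Nonempty) (hKcl : IsClosed K) (hKcv : Convex ℝ K)
    (ustar : V) (hustar : ustar ∈ K)
    (hVI : ∀ v ∈ K, f (v - ustar) ≤ A ustar (v - ustar))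
    (Pih : V →ₗ[ℝ] V) (hPihmem : ∀ v : V, Pih v ∈ Vh)
    (hFortin : ∀ v : V, ∀ w ∈ Wh, ⟪B (v - Pih v), w⟫ = 0)
    (S : Set W) (hSconv : Convex ℝ S)
    (R : W → ℝ) (hRconv : ConvexOn ℝ S R)
    (α : ℕ → ℝ) (hα : ∀ k, 1 ≤ k → 0 < α k)
    (u : ℕ → V) (ψ : ℕ → W) (o : ℕ → W)
    (humem : ∀ k, 1 ≤ k → u k ∈ Vh) (hψmem : ∀ k, ψ k ∈ Wh)
    (homem : ∀ k, o k ∈ S)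
    (hgrad : ∀ k, HasGradientAt R (ψ k) (o k))
    (hobs : ∀ k, 1 ≤ k → ∀ w ∈ Wh, ⟪o k - B (u k), w⟫ = 0)
    (hostar : B ustar ∈ S)
    (hscheme : ∀ k, 1 ≤ k → ∀ v ∈ Vh,
      α k * A (u k) v + ⟪B v, ψ k - ψ (k - 1)⟫ = α k * f v) :
    ∀ k, 1 ≤ k →
      (R (B ustar) - R (o k) - ⟪ψ k, B ustar - o k⟫)
          + α k * A (u k - Pih ustar) (u k - Pih ustar)
        ≤ (R (B ustar) - R (o (k - 1)) - ⟪ψ (k - 1), B ustar - o (k - 1)⟫)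
          - α k * A (Pih ustar) (u k - Pih ustar)
          + α k * f (u k - Pih ustar) := by
  intro k hk
  set e : V := u k - Pih ustar with he
  have heVh : e ∈ Vh := Vh.sub_mem (humem k hk) (hPihmem ustar)
  have hwWh : ψ k - ψ (k - 1) ∈ Wh := Wh.sub_mem (hψmem k) (hψmem (k - 1))
  have hsch := hscheme k hk e heVh
  have hsplit : A (u k) e = A e e + A (Pih ustar) e := by
    have huk : u k = e + Pih ustar := by rw [he]; abel
    rw [huk, map_add, LinearMap.add_apply]
  rw [hsplit, mul_add] at hsch
  -- orthogonality: ⟪o k - B ustar, w⟫ = ⟪B e, w⟫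
  have h1 := hobs k hk (ψ k - ψ (k - 1)) hwWh
  have h2 := hFortin ustar (ψ k - ψ (k - 1)) hwWh
  have hdecomp : o k - B ustar
      = (o k - B (u k)) + B e - B (ustar - Pih ustar) := by
    rw [he]; simp only [map_sub]; abel
  have hinner_eq : ⟪o k - B ustar, ψ k - ψ (k - 1)⟫ = ⟪B e, ψ k - ψ (k - 1)⟫ := by
    rw [hdecomp, inner_sub_left, inner_add_left, h1, h2]; ring
  -- gradient inequality (Bregman nonnegativity)
  have hgradineq : ⟪ψ (k - 1), o k - o (k - 1)⟫ ≤ R (o k) - R (o (k - 1)) :=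
    grad_ineq_aux hRconv (homem k) (homem (k - 1)) (hgrad (k - 1))
  -- inner product identity
  have hiden : ⟪ψ k, B ustar - o k⟫ - ⟪ψ (k - 1), B ustar - o (k - 1)⟫
      + ⟪ψ (k - 1), o k - o (k - 1)⟫ + ⟪o k - B ustar, ψ k - ψ (k - 1)⟫ = 0 := by
    have hc : ⟪o k - B ustar, ψ k - ψ (k - 1)⟫ = ⟪ψ k - ψ (k - 1), o k - B ustar⟫ :=
      real_inner_comm _ _
    rw [hc]
    simp only [inner_sub_left, inner_sub_right]
    ring
  linarith [hgradineq, hiden, hsch, hinner_eq]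
end

section
/- Let V and W be real Hilbert spaces, V_h ⊆ V and W_h ⊆ W subspaces, B : V → W bounded linear, A : V × V → ℝ bilinear with |A(u,v)| ≤ M·‖u‖·‖v‖ and A(v,v) ≥ C·‖v‖² for all u, v (M, C > 0), f a continuous linear functional on V, K ⊆ V nonempty closed convex, u* ∈ K a solution of the variational inequality A(u*, v − u*) ≥ f(v − u*) for all v ∈ K, λ* ∈ W with ⟨λ*, B v⟩ = A(u*, v) − f(v) for all v ∈ V, and Π : V → V_h a linear Fortin map with ⟨B(v − Π v), w⟩ = 0 for all v ∈ V, w ∈ W_h. Let S ⊆ W be convex with o* := B u* ∈ S, R : W → ℝ convex on S, and let α_k > 0, u_k ∈ V_h, ψ_k ∈ W_h (with a given ψ₀ ∈ W_h), and o_k ∈ S (k ≥ 0) satisfy for every k ≥ 1: α_k·A(u_k, v) + ⟨B v, ψ_k − ψ_{k−1}⟩ = α_k·f(v) for all v ∈ V_h, ⟨o_k − B u_k, w⟩ = 0 for all w ∈ W_h, and R differentiable at every o_k (k ≥ 0) with gradient ∇R(o_k) = ψ_k. Then, with D(p, q) := R(p) − R(q) − ⟨∇R(q), p − q⟩ and ū_ℓ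 = (Σ_{k=1}^ℓ α_k u_k)/(Σ_{k=1}^ℓ α_k), for every ℓ ≥ 1: (C/4)·‖ū_ℓ − u*‖² ≤ D(o*, o₀)/(Σ_{k=1}^ℓ α_k) + ((M² + C²)/(2C))·‖Π u* − u*‖² + |⟨λ*, B(Π u* − u*)⟩| + inf_{v ∈ K} |⟨λ*, B(v − ū_ℓ)⟩|. -/
open scoped RealInnerProductSpace

lemma tele_aux (g : ℕ → ℝ) (ℓ : ℕ) :
    ∑ k ∈ Finset.Icc 1 ℓ, (g (k - 1) - g k) = g 0 - g ℓ := by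
  induction ℓ with
  | zero => simp
  | succ n ih =>
    rw [Finset.sum_Icc_succ_top (Nat.succ_le_succ (Nat.zero_le n)), ih]
    simp

lemma convex_grad_ineq_s10 {W : Type*} [NormedAddCommGroup W] [InnerProductSpace ℝ W]
    [CompleteSpace W] {S : Set W} {R : W → ℝ} (hR : ConvexOn ℝ S R) {q g : W}
    (hg : HasGradientAt R g q) (hq : q ∈ S) {p : W} (hp : p ∈ S) :
    ⟪g, p - q⟫ ≤ R p - R q := by
  set φ : ℝ → ℝ := fun t => R (q + t • (p - q)) with hφ
  have hline : HasDerivAt φ ⟪g, p - q⟫ 0 := by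
    have h1 : HasDerivAt (fun t : ℝ => q + t • (p - q)) (p - q) 0 := by
      simpa using ((hasDerivAt_id (0 : ℝ)).smul_const (p - q)).const_add q
    have h2 := hg.hasFDerivAt
    have h0 : q + (0 : ℝ) • (p - q) = q := by simp
    rw [← h0] at h2
    have := h2.comp_hasDerivAt 0 h1
    exact this
  have htend : Filter.Tendsto (slope φ 0) (nhdsWithin 0 (Set.Ioi 0)) (nhds ⟪g, p - q⟫) :=
    (hasDerivAt_iff_tendsto_slope.mp hline).mono_left
      (nhdsWithin_mono 0 (fun x hx => by simpa using ne_of_gt hx))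
  refine le_of_tendsto htend ?_
  filter_upwards [Ioc_mem_nhdsGT (zero_lt_one)] with t ht
  have hpt : q + t • (p - q) = (1 - t) • q + t • p := by
    rw [sub_smul, one_smul, smul_sub]; abel
  have hconv := hR.2 hq hp (by linarith [ht.2] : (0:ℝ) ≤ 1 - t) (le_of_lt ht.1)
    (by ring)
  rw [← hpt] at hconv
  have hφ0 : φ 0 = R q := by simp [hφ]
  rw [slope_def_field, sub_zero, div_le_iff₀ ht.1, hφ0]
  have : φ t = R (q + t • (p - q)) := rfl
  rw [this]
  simp only [smul_eq_mul] at hconv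
  nlinarith [hconv]


set_option maxHeartbeats 1000000 in
/-- Best approximation estimate for the weighted primal averages of the
conforming proximal Galerkin scheme:
`(C/4)·‖ū_ℓ − u*‖² ≤ D(o*, o₀)/(Σ α_k) + ((M² + C²)/(2C))·‖Π u* − u*‖²
  + |⟨λ*, B(Π u* − u*)⟩| + inf_{v ∈ K} |⟨λ*, B(v − ū_ℓ)⟩|`,
where `D(p, q) = R(p) − R(q) − ⟨∇R(q), p − q⟩` and `o* = B u*`. -/
theorem statement10
    {V W : Type*} [NormedAddCommGroup V] [InnerProductSpace ℝ V] [CompleteSpace V]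
    [NormedAddCommGroup W] [InnerProductSpace ℝ W] [CompleteSpace W]
    (Vh : Submodule ℝ V) (Wh : Submodule ℝ W)
    (B : V →L[ℝ] W)
    (A : V →ₗ[ℝ] V →ₗ[ℝ] ℝ) (M C : ℝ) (hM : 0 < M) (hC : 0 < C)
    (hAbdd : ∀ u v : V, |A u v| ≤ M * ‖u‖ * ‖v‖)
    (hAcoer : ∀ v : V, C * ‖v‖ ^ 2 ≤ A v v)
    (f : V →L[ℝ] ℝ)
    (K : Set V) (hKne : K.Nonempty) (hKcl : IsClosed K) (hKcv : Convex ℝ K)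
    (ustar : V) (hustar : ustar ∈ K)
    (hVI : ∀ v ∈ K, f (v - ustar) ≤ A ustar (v - ustar))
    (lam : W) (hlam : ∀ v : V, ⟪lam, B v⟫ = A ustar v - f v)
    (Pih : V →ₗ[ℝ] V) (hPihmem : ∀ v : V, Pih v ∈ Vh)
    (hFortin : ∀ v : V, ∀ w ∈ Wh, ⟪B (v - Pih v), w⟫ = 0)
    (S : Set W) (hSconv : Convex ℝ S) (hostar : B ustar ∈ S)
    (R : W → ℝ) (hRconv : ConvexOn ℝ S R)
    (α : ℕ → ℝ) (hα : ∀ k, 1 ≤ k → 0 < α k)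
    (u : ℕ → V) (ψ : ℕ → W) (o : ℕ → W)
    (humem : ∀ k, 1 ≤ k → u k ∈ Vh) (hψmem : ∀ k, ψ k ∈ Wh)
    (homem : ∀ k, o k ∈ S)
    (hgrad : ∀ k, HasGradientAt R (ψ k) (o k))
    (hscheme : ∀ k, 1 ≤ k → ∀ v ∈ Vh,
      α k * A (u k) v + ⟪B v, ψ k - ψ (k - 1)⟫ = α k * f v)
    (hobs : ∀ k, 1 ≤ k → ∀ w ∈ Wh, ⟪o k - B (u k), w⟫ = 0)
    (ℓ : ℕ) (hℓ : 1 ≤ ℓ)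
    (ubar : V)
    (hubar : ubar =
      (∑ k ∈ Finset.Icc 1 ℓ, α k)⁻¹ • ∑ k ∈ Finset.Icc 1 ℓ, α k • u k) :
    (C / 4) * ‖ubar - ustar‖ ^ 2 ≤
      (R (B ustar) - R (o 0) - ⟪ψ 0, B ustar - o 0⟫) / (∑ k ∈ Finset.Icc 1 ℓ, α k)
        + ((M ^ 2 + C ^ 2) / (2 * C)) * ‖Pih ustar - ustar‖ ^ 2
        + |⟪lam, B (Pih ustar - ustar)⟫|
        + ⨅ v : K, |⟪lam, B ((v : V) - ubar)⟫| := by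
  set s := Finset.Icc 1 ℓ with hs
  set T : ℝ := ∑ k ∈ s, α k with hT
  have hTpos : 0 < T := by
    refine Finset.sum_pos (fun k hk => hα k (Finset.mem_Icc.mp hk).1) ?_
    exact ⟨1, Finset.mem_Icc.mpr ⟨le_rfl, hℓ⟩⟩
  set D : ℕ → ℝ := fun j => R (B ustar) - R (o j) - ⟪ψ j, B ustar - o j⟫ with hD
  have hD0 : D 0 = R (B ustar) - R (o 0) - ⟪ψ 0, B ustar - o 0⟫ := rfl
  set P : ℝ := ‖Pih ustar - ustar‖ ^ 2 with hP
  set c2 : ℝ := ⟪lam, B (Pih ustar - ustar)⟫ with hc2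
  -- the per-step key inequality
  have hkey : ∀ k ∈ s,
      (C/2) * (α k * ‖u k - ustar‖ ^ 2) + ⟪lam, B (α k • (u k - ustar))⟫
        - α k * ((M ^ 2 / (2 * C)) * P) - α k * c2 ≤ D (k - 1) - D k := by
    intro k hk
    have hk1 : 1 ≤ k := (Finset.mem_Icc.mp hk).1
    set v : V := u k - Pih ustar with hv
    have hvmem : v ∈ Vh := Vh.sub_mem (humem k hk1) (hPihmem ustar)
    set w : W := ψ k - ψ (k - 1) with hw
    have hwmem : w ∈ Wh := Wh.sub_mem (hψmem k) (hψmem (k - 1))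
    have hsch := hscheme k hk1 v hvmem
    -- rewrite the inner product term
    have h1 := hobs k hk1 w hwmem
    have h2 := hFortin ustar w hwmem
    rw [inner_sub_left] at h1
    rw [map_sub, inner_sub_left] at h2
    have hBv : ⟪B v, w⟫ = ⟪o k, w⟫ - ⟪B ustar, w⟫ := by
      rw [hv, map_sub, inner_sub_left]
      linarith
    -- scheme identity in convenient form
    have hAfv : α k * (A (u k) v - f v) = ⟪B ustar - o k, w⟫ := by
      rw [inner_sub_left, mul_sub]
      rw [hBv] at hsch
      linarith
    -- Bregman identity
    have hE : ⟪ψ (k - 1), o k - o (k - 1)⟫ ≤ R (o k) - R (o (k - 1)) :=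
      convex_grad_ineq_s10 hRconv (hgrad (k - 1)) (homem (k - 1)) (homem k)
    have hDident : ⟪B ustar - o k, w⟫ =
        (D (k - 1) - D k) -
          (R (o k) - R (o (k - 1)) - ⟪ψ (k - 1), o k - o (k - 1)⟫) := by
      simp only [hD, hw, inner_sub_left, inner_sub_right]
      have e1 := real_inner_comm (B ustar) (ψ k)
      have e2 := real_inner_comm (B ustar) (ψ (k - 1))
      have e3 := real_inner_comm (o k) (ψ k)
      have e4 := real_inner_comm (o k) (ψ (k - 1))
      linarith
    have hstep : α k * (A (u k) v - f v) ≤ D (k - 1) - D k := by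
      rw [hAfv, hDident]; linarith
    -- lower bound for A (u k) v - f v
    have expand1 : A (u k) v = A (u k - ustar) v + A ustar v := by
      rw [← LinearMap.add_apply, ← map_add, sub_add_cancel]
    have expand2 : A (u k - ustar) v =
        A (u k - ustar) (u k - ustar) - A (u k - ustar) (Pih ustar - ustar) := by
      rw [← map_sub]
      congr 1
      rw [hv]; abel
    have hlamv : A ustar v - f v = ⟪lam, B (u k - ustar)⟫ - c2 := by
      rw [← hlam v, hc2, hv]
      have : B (u k - Pih ustar) = B (u k - ustar) - B (Pih ustar - ustar) := by
        rw [← map_sub]; congr 1; abel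
      rw [this, inner_sub_right]
    have hyoung : A (u k - ustar) (Pih ustar - ustar) ≤
        (C/2) * ‖u k - ustar‖ ^ 2 + (M ^ 2 / (2 * C)) * P := by
      have habs := hAbdd (u k - ustar) (Pih ustar - ustar)
      have h1 : A (u k - ustar) (Pih ustar - ustar) ≤
          M * ‖u k - ustar‖ * ‖Pih ustar - ustar‖ := (le_abs_self _).trans habs
      have h2 : M * ‖u k - ustar‖ * ‖Pih ustar - ustar‖ ≤
          (C/2) * ‖u k - ustar‖ ^ 2 + (M ^ 2 / (2 * C)) * ‖Pih ustar - ustar‖ ^ 2 := by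
        rw [← sub_nonneg]
        have expand : (C/2) * ‖u k - ustar‖ ^ 2
            + (M ^ 2 / (2 * C)) * ‖Pih ustar - ustar‖ ^ 2
            - M * ‖u k - ustar‖ * ‖Pih ustar - ustar‖ =
            (C * ‖u k - ustar‖ - M * ‖Pih ustar - ustar‖) ^ 2 / (2 * C) := by
          field_simp
          ring
        rw [expand]
        positivity
      rw [hP]
      linarith
    have hcoer := hAcoer (u k - ustar)
    have hlow : (C/2) * ‖u k - ustar‖ ^ 2 - (M ^ 2 / (2 * C)) * P
        + ⟪lam, B (u k - ustar)⟫ - c2 ≤ A (u k) v - f v := by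
      rw [expand1, expand2]
      linarith
    have hαk := hα k hk1
    have := mul_le_mul_of_nonneg_left hlow hαk.le
    have hfin : α k * ((C/2) * ‖u k - ustar‖ ^ 2 - (M ^ 2 / (2 * C)) * P
        + ⟪lam, B (u k - ustar)⟫ - c2) ≤ D (k - 1) - D k := by
      calc α k * _ ≤ α k * (A (u k) v - f v) := this
        _ ≤ D (k - 1) - D k := hstep
    have hip : ⟪lam, B (α k • (u k - ustar))⟫ = α k * ⟪lam, B (u k - ustar)⟫ := by
      rw [map_smul]
      exact real_inner_smul_right lam _ (α k)
    rw [hip]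
    linarith [hfin]
  -- sum the key inequality
  have hsum := Finset.sum_le_sum hkey
  rw [tele_aux D ℓ] at hsum
  set SE : ℝ := ∑ k ∈ s, α k * ‖u k - ustar‖ ^ 2 with hSE
  have esplit : ∑ k ∈ s, ((C/2) * (α k * ‖u k - ustar‖ ^ 2)
      + ⟪lam, B (α k • (u k - ustar))⟫
      - α k * ((M ^ 2 / (2 * C)) * P) - α k * c2)
      = (C/2) * SE + ⟪lam, B (∑ k ∈ s, α k • (u k - ustar))⟫
        - T * ((M ^ 2 / (2 * C)) * P) - T * c2 := by
    rw [Finset.sum_sub_distrib, Finset.sum_sub_distrib, Finset.sum_add_distrib,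
      ← Finset.mul_sum, ← Finset.sum_mul, ← Finset.sum_mul, map_sum, inner_sum]
  rw [esplit] at hsum
  -- identify the averaged term
  have hBsum : ∑ k ∈ s, α k • (u k - ustar) = T • (ubar - ustar) := by
    simp only [smul_sub, Finset.sum_sub_distrib, ← Finset.sum_smul]
    rw [hubar, smul_smul, mul_inv_cancel₀ (ne_of_gt hTpos), one_smul]
  set J : ℝ := ⟪lam, B (ubar - ustar)⟫ with hJ
  have hin : ⟪lam, B (∑ k ∈ s, α k • (u k - ustar))⟫ = T * J := by
    rw [hBsum, map_smul]
    exact real_inner_smul_right lam _ T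
  rw [hin] at hsum
  -- D ℓ ≥ 0
  have hDl : 0 ≤ D ℓ := by
    have := convex_grad_ineq_s10 hRconv (hgrad ℓ) (homem ℓ) hostar
    simp only [hD]
    linarith
  -- Jensen : T * ‖ubar - ustar‖^2 ≤ SE
  have hjensen : T * ‖ubar - ustar‖ ^ 2 ≤ SE := by
    have h1 : ‖T • (ubar - ustar)‖ ≤ ∑ k ∈ s, α k * ‖u k - ustar‖ := by
      rw [← hBsum]
      refine (norm_sum_le _ _).trans_eq ?_
      refine Finset.sum_congr rfl fun k hk => ?_
      rw [norm_smul, Real.norm_eq_abs, abs_of_pos (hα k (Finset.mem_Icc.mp hk).1)]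
    have h2 : (∑ k ∈ s, α k * ‖u k - ustar‖) ^ 2 ≤ T * SE := by
      calc (∑ k ∈ s, α k * ‖u k - ustar‖) ^ 2
          = (∑ k ∈ s, Real.sqrt (α k) * (Real.sqrt (α k) * ‖u k - ustar‖)) ^ 2 := by
            congr 1
            refine Finset.sum_congr rfl fun k hk => ?_
            rw [← mul_assoc, Real.mul_self_sqrt (hα k (Finset.mem_Icc.mp hk).1).le]
        _ ≤ (∑ k ∈ s, Real.sqrt (α k) ^ 2) * ∑ k ∈ s, (Real.sqrt (α k) * ‖u k - ustar‖) ^ 2 :=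
            Finset.sum_mul_sq_le_sq_mul_sq s _ _
        _ = T * SE := by
            congr 1
            · refine Finset.sum_congr rfl fun k hk => ?_
              rw [Real.sq_sqrt (hα k (Finset.mem_Icc.mp hk).1).le]
            · refine Finset.sum_congr rfl fun k hk => ?_
              rw [mul_pow, Real.sq_sqrt (hα k (Finset.mem_Icc.mp hk).1).le]
    have h3 : ‖T • (ubar - ustar)‖ = T * ‖ubar - ustar‖ := by
      rw [norm_smul, Real.norm_eq_abs, abs_of_pos hTpos]
    have h4 : (T * ‖ubar - ustar‖) ^ 2 ≤ T * SE := by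
      rw [← h3]
      calc ‖T • (ubar - ustar)‖ ^ 2 ≤ (∑ k ∈ s, α k * ‖u k - ustar‖) ^ 2 :=
            pow_le_pow_left₀ (norm_nonneg _) h1 2
        _ ≤ T * SE := h2
    have h5 : T * (T * ‖ubar - ustar‖ ^ 2) ≤ T * SE := by nlinarith [h4]
    exact le_of_mul_le_mul_left h5 hTpos
  -- main inequality after dividing by T
  clear_value T D P c2 SE J
  have hCpos : (0:ℝ) < C/2 := by linarith
  have hmain : (C/2) * ‖ubar - ustar‖ ^ 2 ≤
      D 0 / T + (M ^ 2 / (2 * C)) * P + c2 - J := by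
    have hmul := mul_le_mul_of_nonneg_left hjensen hCpos.le
    have step : (C/2) * (T * ‖ubar - ustar‖ ^ 2) + T * J - T * ((M ^ 2 / (2 * C)) * P)
        - T * c2 ≤ D 0 := by linarith [hsum, hDl, hmul]
    have hdiv : (C/2) * ‖ubar - ustar‖ ^ 2 + J - (M ^ 2 / (2 * C)) * P - c2 ≤ D 0 / T := by
      rw [le_div_iff₀ hTpos]
      linarith [step]
    linarith [hdiv]
  -- infimum bound
  haveI : Nonempty K := hKne.to_subtype
  have hinf : -J ≤ ⨅ v : K, |⟪lam, B ((v : V) - ubar)⟫| := by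
    refine le_ciInf fun v => ?_
    have hvK := v.2
    have hsplit : -J = ⟪lam, B (ustar - (v : V))⟫ + ⟪lam, B ((v : V) - ubar)⟫ := by
      rw [← inner_add_right, ← map_add]
      have harg : (ustar - (v : V)) + ((v : V) - ubar) = -(ubar - ustar) := by abel
      rw [harg, map_neg, inner_neg_right, hJ]
    have h1 : ⟪lam, B (ustar - (v : V))⟫ ≤ 0 := by
      rw [hlam]
      have h := hVI (v : V) hvK
      have e1 : (A ustar) (ustar - (v : V)) = -((A ustar) ((v : V) - ustar)) := by
        rw [← map_neg]; congr 1; abel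
      have e2 : f (ustar - (v : V)) = -(f ((v : V) - ustar)) := by
        rw [← map_neg]; congr 1; abel
      rw [e1, e2]; linarith
    have h2 := le_abs_self ⟪lam, B ((v : V) - ubar)⟫
    linarith [hsplit.le, hsplit.ge]
  -- final assembly
  rw [← hD0]
  have hX : (0:ℝ) ≤ ‖ubar - ustar‖ ^ 2 := sq_nonneg _
  have hcoeff : (M ^ 2 + C ^ 2) / (2 * C) * P = (M ^ 2 / (2 * C)) * P + (C/2) * P := by
    field_simp
  have habs : c2 ≤ |c2| := le_abs_self _
  have hCP : 0 ≤ (C/2) * P := by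
    have : (0:ℝ) ≤ P := by rw [hP]; positivity
    nlinarith
  have hCX : 0 ≤ (C/4) * ‖ubar - ustar‖ ^ 2 := by positivity
  linarith [hmain, hinf, habs, hCP, hCX, hcoeff]
end

section
/- Let V and W be real Hilbert spaces, V_h ⊆ V and W_h ⊆ W subspaces, B : V → W bounded linear, A : V × V → ℝ bilinear with |A(u,v)| ≤ M·‖u‖·‖v‖ for all u, v, f a continuous linear functional on V, u* ∈ V, and λ* ∈ W with ⟨λ*, B v⟩ = A(u*, v) − f(v) for all v ∈ V. Let Π : V → V_h be a linear Fortin map with ⟨B(v − Π v), w⟩ = 0 for all v ∈ V, w ∈ W_h, and ‖Π v‖ ≤ C_Π·‖v‖ for all v ∈ V. Let α_k > 0, ψ₀ ∈ W_h, and (u_k, ψ_k) ∈ V_h × W_h satisfy α_k·A(u_k, v) + ⟨B v, ψ_k − ψ_{k−1}⟩ = α_k·f(v) for all v ∈ V_h and all 1 ≤ k ≤ ℓ; set ū_ℓ = (Σ_{k=1}^ℓ α_k u_k)/(Σ_{k=1}^ℓ α_k) and λ̄_ℓ = (ψ₀ − ψ_ℓ)/(Σ_{k=1}^ℓ α_k).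 Then for every nonzero v ∈ V: ⟨λ̄_ℓ − λ*, B v⟩ ≤ (M·C_Π·‖ū_ℓ − u*‖ + S)·‖v‖, where S := sup over nonzero v ∈ V of |⟨λ*, B(v − Π v)⟩|/‖v‖; equivalently, sup_{v ≠ 0} ⟨λ̄_ℓ − λ*, B v⟩/‖v‖ ≤ M·C_Π·‖ū_ℓ − u*‖ + S. -/
open scoped RealInnerProductSpace

/-- Best approximation estimate for the averaged dual variable
`λ̄_ℓ = (ψ₀ − ψ_ℓ)/(Σ α_k)`: for every nonzero `v`,
`⟨λ̄_ℓ − λ*, B v⟩ ≤ (M·C_Π·‖ū_ℓ − u*‖ + S)·‖v‖`, where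
`S = sup_{v ≠ 0} |⟨λ*, B(v − Π v)⟩| / ‖v‖`. -/
theorem statement11
    {V W : Type*} [NormedAddCommGroup V] [InnerProductSpace ℝ V] [CompleteSpace V]
    [NormedAddCommGroup W] [InnerProductSpace ℝ W] [CompleteSpace W]
    (Vh : Submodule ℝ V) (Wh : Submodule ℝ W)
    (B : V →L[ℝ] W)
    (A : V →ₗ[ℝ] V →ₗ[ℝ] ℝ) (M : ℝ)
    (hAbdd : ∀ u v : V, |A u v| ≤ M * ‖u‖ * ‖v‖)
    (f : V →L[ℝ] ℝ) (ustar : V)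
    (lam : W) (hlam : ∀ v : V, ⟪lam, B v⟫ = A ustar v - f v)
    (Pih : V →ₗ[ℝ] V) (hPihmem : ∀ v : V, Pih v ∈ Vh)
    (hFortin : ∀ v : V, ∀ w ∈ Wh, ⟪B (v - Pih v), w⟫ = 0)
    (CPih : ℝ) (hPihbdd : ∀ v : V, ‖Pih v‖ ≤ CPih * ‖v‖)
    (ℓ : ℕ) (hℓ : 1 ≤ ℓ)
    (α : ℕ → ℝ) (hα : ∀ k, 1 ≤ k → k ≤ ℓ → 0 < α k)
    (u : ℕ → V) (ψ : ℕ → W)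
    (humem : ∀ k, 1 ≤ k → k ≤ ℓ → u k ∈ Vh)
    (hψmem : ∀ k, k ≤ ℓ → ψ k ∈ Wh)
    (hscheme : ∀ k, 1 ≤ k → k ≤ ℓ → ∀ v ∈ Vh,
      α k * A (u k) v + ⟪B v, ψ k - ψ (k - 1)⟫ = α k * f v)
    (ubar : V)
    (hubar : ubar =
      (∑ k ∈ Finset.Icc 1 ℓ, α k)⁻¹ • ∑ k ∈ Finset.Icc 1 ℓ, α k • u k)
    (lambar : W)
    (hlambar : lambar = (∑ k ∈ Finset.Icc 1 ℓ, α k)⁻¹ • (ψ 0 - ψ ℓ)) :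
    ∀ v : V, v ≠ 0 →
      ⟪lambar - lam, B v⟫ ≤
        (M * CPih * ‖ubar - ustar‖ +
          ⨆ x : {x : V // x ≠ 0}, |⟪lam, B ((x : V) - Pih (x : V))⟫| / ‖(x : V)‖) * ‖v‖ := by
  intro v hv
  have hnv : (0:ℝ) < ‖v‖ := norm_pos_iff.mpr hv
  set S := ∑ k ∈ Finset.Icc 1 ℓ, α k with hSdef
  have hS : 0 < S := Finset.sum_pos
    (fun k hk => hα k (Finset.mem_Icc.mp hk).1 (Finset.mem_Icc.mp hk).2)
    ⟨1, Finset.mem_Icc.mpr ⟨le_refl 1, hℓ⟩⟩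
  have hC : 0 ≤ CPih := by
    have h1 := hPihbdd v
    have h2 := norm_nonneg (Pih v)
    nlinarith
  have hM : 0 ≤ M := by
    have h1 := hAbdd v v
    have h2 := abs_nonneg (A v v)
    nlinarith [mul_pos hnv hnv]
  -- discrete variational identity
  have hkey : ∀ w ∈ Vh, ⟪lambar, B w⟫ = A ubar w - f w := by
    intro w hw
    have hsum : ∑ k ∈ Finset.Icc 1 ℓ, (α k * A (u k) w + ⟪B w, ψ k - ψ (k-1)⟫)
        = ∑ k ∈ Finset.Icc 1 ℓ, α k * f w := by
      refine Finset.sum_congr rfl fun k hk => ?_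
      obtain ⟨h1, h2⟩ := Finset.mem_Icc.mp hk
      exact hscheme k h1 h2 w hw
    rw [Finset.sum_add_distrib] at hsum
    have htel : ∑ k ∈ Finset.Icc 1 ℓ, ⟪B w, ψ k - ψ (k-1)⟫ = ⟪B w, ψ ℓ - ψ 0⟫ := by
      have h1 : ∑ k ∈ Finset.Icc 1 ℓ, ⟪B w, ψ k - ψ (k-1)⟫
          = ∑ i ∈ Finset.range ℓ, ((fun j => ⟪B w, ψ j⟫) (i+1) - (fun j => ⟪B w, ψ j⟫) i) := by
        rw [← Finset.Ico_add_one_right_eq_Icc, Finset.sum_Ico_eq_sum_range]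
        simp [inner_sub_right, Nat.add_sub_cancel_left, add_comm]
      rw [h1, Finset.sum_range_sub (fun j => ⟪B w, ψ j⟫), ← inner_sub_right]
    have hAubar : A ubar w = S⁻¹ * ∑ k ∈ Finset.Icc 1 ℓ, α k * A (u k) w := by
      rw [hubar, map_smul, map_sum]
      simp [Finset.mul_sum]
    have hf : ∑ k ∈ Finset.Icc 1 ℓ, α k * f w = S * f w := by
      rw [hSdef, Finset.sum_mul]
    have hlb : ⟪lambar, B w⟫ = S⁻¹ * (-⟪B w, ψ ℓ - ψ 0⟫) := by
      rw [hlambar, real_inner_smul_left]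
      congr 1
      rw [real_inner_comm]
      simp [inner_sub_right, inner_sub_left]
    rw [htel, hf] at hsum
    have hAw : ∑ k ∈ Finset.Icc 1 ℓ, α k * A (u k) w = S * A ubar w := by
      rw [hAubar]
      field_simp
    rw [hAw] at hsum
    rw [hlb]
    have : ⟪B w, ψ ℓ - ψ 0⟫ = S * f w - S * A ubar w := by linarith
    rw [this]
    field_simp
    ring
  -- lambar is in Wh
  have hlbmem : lambar ∈ Wh := by
    rw [hlambar]
    exact Wh.smul_mem _ (Wh.sub_mem (hψmem 0 (Nat.zero_le ℓ)) (hψmem ℓ le_rfl))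
  -- boundedness of the sup
  have hBdd : BddAbove (Set.range fun x : {x : V // x ≠ 0} =>
      |⟪lam, B ((x : V) - Pih (x : V))⟫| / ‖(x : V)‖) := by
    refine ⟨‖lam‖ * ‖B‖ * (1 + CPih), ?_⟩
    rintro r ⟨⟨x, hx⟩, rfl⟩
    have hnx : (0:ℝ) < ‖x‖ := norm_pos_iff.mpr hx
    rw [div_le_iff₀ hnx]
    calc |⟪lam, B (x - Pih x)⟫| ≤ ‖lam‖ * ‖B (x - Pih x)‖ := abs_real_inner_le_norm _ _
      _ ≤ ‖lam‖ * (‖B‖ * ‖x - Pih x‖) := by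
          gcongr; exact B.le_opNorm _
      _ ≤ ‖lam‖ * (‖B‖ * (‖x‖ + CPih * ‖x‖)) := by
          gcongr
          calc ‖x - Pih x‖ ≤ ‖x‖ + ‖Pih x‖ := norm_sub_le _ _
            _ ≤ ‖x‖ + CPih * ‖x‖ := by linarith [hPihbdd x]
      _ = ‖lam‖ * ‖B‖ * (1 + CPih) * ‖x‖ := by ring
  set Sup := ⨆ x : {x : V // x ≠ 0}, |⟪lam, B ((x : V) - Pih (x : V))⟫| / ‖(x : V)‖ with hSup
  have hSupv : |⟪lam, B (v - Pih v)⟫| ≤ Sup * ‖v‖ := by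
    have h := le_ciSup hBdd (⟨v, hv⟩ : {x : V // x ≠ 0})
    rw [div_le_iff₀ hnv] at h
    exact h
  -- split the inner product
  have hsplit : ⟪lambar - lam, B v⟫
      = ⟪lambar - lam, B (Pih v)⟫ + ⟪lambar - lam, B (v - Pih v)⟫ := by
    rw [← inner_add_right, ← map_add]
    congr 2
    abel
  -- term 1
  have hterm1 : ⟪lambar - lam, B (Pih v)⟫ ≤ M * CPih * ‖ubar - ustar‖ * ‖v‖ := by
    have h1 : ⟪lambar - lam, B (Pih v)⟫ = A (ubar - ustar) (Pih v) := by
      rw [inner_sub_left, hkey (Pih v) (hPihmem v), hlam (Pih v), map_sub,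
        LinearMap.sub_apply]
      ring
    rw [h1]
    calc A (ubar - ustar) (Pih v) ≤ |A (ubar - ustar) (Pih v)| := le_abs_self _
      _ ≤ M * ‖ubar - ustar‖ * ‖Pih v‖ := hAbdd _ _
      _ ≤ M * ‖ubar - ustar‖ * (CPih * ‖v‖) := by
          nlinarith [hPihbdd v, mul_nonneg hM (norm_nonneg (ubar - ustar)), norm_nonneg (Pih v)]
      _ = M * CPih * ‖ubar - ustar‖ * ‖v‖ := by ring
  -- term 2
  have hterm2 : ⟪lambar - lam, B (v - Pih v)⟫ ≤ Sup * ‖v‖ := by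
    have h0 : ⟪B (v - Pih v), lambar⟫ = 0 := hFortin v lambar hlbmem
    have h0' : ⟪lambar, B (v - Pih v)⟫ = 0 := by
      rw [real_inner_comm]; exact h0
    have h1 : ⟪lambar - lam, B (v - Pih v)⟫ = -⟪lam, B (v - Pih v)⟫ := by
      rw [inner_sub_left, h0']
      ring
    rw [h1]
    calc -⟪lam, B (v - Pih v)⟫ ≤ |⟪lam, B (v - Pih v)⟫| := neg_le_abs _
      _ ≤ Sup * ‖v‖ := hSupv
  rw [hsplit]
  nlinarith [hterm1, hterm2]
end
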